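/- arXiv:1107.4443 — 4 statements merged into one kernel-verified Lean document; each statement's English description precedes it below -/
import Mathlib

section
/- Let β > -1, s > -1, γ > 0 and 0 < p ≤ 1. There exists a constant C depending only on β, s, γ, p such that for every nonnegative increasing function G on [0,1): ∫₀¹ (∫₀¹ G(r)(1-r)^β (1-rρ)^{-γ} dr)^p (1-ρ)^s dρ ≤ C ∫₀¹ ∫₀¹ G(r)^p (1-r)^{βp+p-1} (1-rρ)^{-γp} (1-ρ)^s dρ dr. -/
open MeasureTheory Metric Set
open scoped ENNReal NNReal

noncomputable section

/-- Euclidean space `ℝⁿ`. -/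
abbrev E (n : ℕ) := EuclideanSpace ℝ (Fin n)

/-- The Laplacian of `f` at `x`, as a sum of pure second derivatives. -/
def lap {n : ℕ} (f : E n → ℝ) (x : E n) : ℝ :=
  ∑ i : Fin n, iteratedFDeriv ℝ 2 f x ![EuclideanSpace.single i 1, EuclideanSpace.single i 1]

/-- `f` is harmonic on the open unit ball of `ℝⁿ`. -/
def HarmonicOnBall {n : ℕ} (f : E n → ℝ) : Prop :=
  ContDiffOn ℝ 2 f (ball 0 1) ∧ ∀ x ∈ ball (0 : E n) 1, lap f x = 0

/-- The normalized surface measure on the unit sphere of `ℝⁿ` (normalized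
`(n-1)`-dimensional Hausdorff measure restricted to the sphere). -/
def sphMeasure (n : ℕ) : Measure (E n) :=
  ((Measure.hausdorffMeasure ((n : ℝ) - 1) (sphere (0 : E n) 1))⁻¹ : ℝ≥0∞) •
    (Measure.hausdorffMeasure ((n : ℝ) - 1) : Measure (E n)).restrict (sphere (0 : E n) 1)

/-- `M₁(f,r) = ∫_S |f(r x')| dx'`. -/
def M1 (n : ℕ) (f : E n → ℝ) (r : ℝ) : ℝ := ∫ x', |f (r • x')| ∂(sphMeasure n)

/-- `M_q(f,r) = (∫_S |f(r x')|^q dx')^{1/q}`. -/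
def Mq (n : ℕ) (q : ℝ) (f : E n → ℝ) (r : ℝ) : ℝ :=
  (∫ x', |f (r • x')| ^ q ∂(sphMeasure n)) ^ (1 / q)

/-- `M_∞(f,r) = sup_{x' ∈ S} |f(r x')|`. -/
def Minf (n : ℕ) (f : E n → ℝ) (r : ℝ) : ℝ :=
  ⨆ x' : sphere (0 : E n) 1, |f (r • (x' : E n))|

/-- Normalized Lebesgue measure on `ℝⁿ` (total mass of the unit ball is 1). -/
def normVol (n : ℕ) : Measure (E n) :=
  ((volume (ball (0 : E n) 1))⁻¹ : ℝ≥0∞) • (volume : Measure (E n))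

/-- `A_α(f,r) = ∫_{|w| ≤ r} |f(w)| (1-|w|)^α dw` with normalized Lebesgue measure. -/
def Aalpha (n : ℕ) (α : ℝ) (f : E n → ℝ) (r : ℝ) : ℝ :=
  ∫ w in closedBall (0 : E n) r, |f w| * (1 - ‖w‖) ^ α ∂(normVol n)

private lemma my_tsum_rpow_le {p : ℝ} (hp0 : 0 < p) (hp1 : p ≤ 1) (a : ℕ → ℝ≥0∞) :
    (∑' n, a n) ^ p ≤ ∑' n, a n ^ p := by
  have key : ∀ s : Finset ℕ, (∑ n ∈ s, a n) ^ p ≤ ∑' n, a n ^ p := by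
    intro s
    refine le_trans ?_ (ENNReal.sum_le_tsum s)
    classical
    induction s using Finset.induction with
    | empty => simp [ENNReal.zero_rpow_of_pos hp0]
    | insert _ _ h ih =>
        rw [Finset.sum_insert h, Finset.sum_insert h]
        exact le_trans (ENNReal.rpow_add_le_add_rpow _ _ hp0.le hp1)
          (add_le_add le_rfl ih)
  have h2 : ∑' n, a n ≤ (∑' n, a n ^ p) ^ (1 / p) := by
    refine Summable.tsum_le_of_sum_le ENNReal.summable ?_
    intro s
    calc ∑ n ∈ s, a n = ((∑ n ∈ s, a n) ^ p) ^ (1 / p) := by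
          rw [← ENNReal.rpow_mul, mul_one_div_cancel hp0.ne', ENNReal.rpow_one]
      _ ≤ (∑' n, a n ^ p) ^ (1 / p) :=
          ENNReal.rpow_le_rpow (key s) (by positivity)
  calc (∑' n, a n) ^ p ≤ ((∑' n, a n ^ p) ^ (1 / p)) ^ p :=
        ENNReal.rpow_le_rpow h2 hp0.le
    _ = ∑' n, a n ^ p := by
        rw [← ENNReal.rpow_mul, one_div_mul_cancel hp0.ne', ENNReal.rpow_one]

private lemma my_keyA (β γ p : ℝ) (hγ : 0 < γ) (hp0 : 0 < p) (hp1 : p ≤ 1)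
    (G : ℝ → ℝ) (hG : MonotoneOn G (Ico 0 1)) (hG0 : ∀ r ∈ Ico (0:ℝ) 1, 0 ≤ G r)
    {ρ : ℝ} (hρ : ρ ∈ Ioo (0:ℝ) 1) :
    (∫⁻ r in Ioo (0:ℝ) 1, ENNReal.ofReal (G r * (1 - r) ^ β * (1 - r * ρ) ^ (-γ))) ^ p
      ≤ ENNReal.ofReal (2 * (4 ^ |β|) ^ p) *
        ∫⁻ r in Ioo (0:ℝ) 1,
          ENNReal.ofReal (G r ^ p * (1 - r) ^ (β * p + p - 1) * (1 - r * ρ) ^ (-(γ * p))) := by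
  obtain ⟨hρ0, hρ1⟩ := hρ
  set e : ℕ → ℝ := fun n => (2:ℝ)⁻¹ ^ n with he
  have he_pos : ∀ n, 0 < e n := fun n => pow_pos (by norm_num) n
  have he_succ : ∀ n, e (n + 1) = e n / 2 := by
    intro n; simp only [he, pow_succ]; ring
  have he_le_one : ∀ n, e n ≤ 1 := fun n => pow_le_one₀ (by norm_num) (by norm_num)
  have he_anti : ∀ m n, m ≤ n → e n ≤ e m := fun m n h =>
    pow_le_pow_of_le_one (by norm_num) (by norm_num) h
  set J : ℕ → Set ℝ := fun n => Ico (1 - e n) (1 - e (n + 1)) with hJ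
  have hJsub : ∀ n, J n ⊆ Ico (0:ℝ) 1 := by
    intro n x hx
    obtain ⟨h1, h2⟩ := hx
    constructor
    · have := he_le_one n; linarith
    · have := he_pos (n + 1); linarith
  have hJmem : Ioo (0:ℝ) 1 ⊆ ⋃ n, J n := by
    intro x hx
    obtain ⟨hx0, hx1⟩ := hx
    have hex : ∃ n : ℕ, e n < 1 - x := by
      obtain ⟨n, hn⟩ := exists_pow_lt_of_lt_one (x := 1 - x) (y := (2:ℝ)⁻¹)
        (by linarith) (by norm_num)
      exact ⟨n, hn⟩
    classical
    have hspec : e (Nat.find hex) < 1 - x := Nat.find_spec hex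
    have hn0 : Nat.find hex ≠ 0 := by
      intro h
      rw [h] at hspec
      simp only [he, pow_zero] at hspec
      linarith
    obtain ⟨k, hk⟩ := Nat.exists_eq_succ_of_ne_zero hn0
    have hmin : ¬ (e k < 1 - x) := Nat.find_min hex (by omega)
    rw [hk] at hspec
    simp only [Nat.succ_eq_add_one] at hspec
    refine mem_iUnion.mpr ⟨k, ?_, ?_⟩
    · push_neg at hmin; linarith
    · exact lt_sub_iff_add_lt.mpr (by have := hspec; linarith)
  have hdisj_lt : ∀ m n : ℕ, m < n → Disjoint (J m) (J n) := by
    intro m n h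
    rw [Set.disjoint_left]
    intro x hx hx'
    have h1 : e n ≤ e (m + 1) := he_anti _ _ (by omega)
    have := hx.2
    have := hx'.1
    linarith
  have hdisj : Pairwise (Function.onFun Disjoint J) := by
    intro m n hmn
    rcases hmn.lt_or_gt with h | h
    · exact hdisj_lt m n h
    · exact (hdisj_lt n m h).symm
  set f : ℝ → ℝ := fun r => G r * (1 - r) ^ β * (1 - r * ρ) ^ (-γ) with hf
  set g : ℝ → ℝ := fun r => G r ^ p * (1 - r) ^ (β * p + p - 1) * (1 - r * ρ) ^ (-(γ * p)) with hg
  set a : ℕ → ℝ≥0∞ := fun n => ∫⁻ r in J n, ENNReal.ofReal (f r) with ha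
  set b : ℕ → ℝ≥0∞ := fun n => ∫⁻ r in J (n + 1), ENNReal.ofReal (g r) with hb
  set C : ℝ := 2 * (4 ^ |β|) ^ p with hC
  have hCpos : 0 < C := by positivity
  -- Step 1 : LHS integral ≤ tsum of a
  have step1 : (∫⁻ r in Ioo (0:ℝ) 1, ENNReal.ofReal (f r)) ≤ ∑' n, a n := by
    calc (∫⁻ r in Ioo (0:ℝ) 1, ENNReal.ofReal (f r))
        ≤ ∫⁻ r in ⋃ n, J n, ENNReal.ofReal (f r) := lintegral_mono_set hJmem
      _ = ∑' n, a n := lintegral_iUnion (fun n => measurableSet_Ico) hdisj _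
  -- Step 2 : core dyadic estimate
  have step2 : ∀ n, a n ^ p ≤ ENNReal.ofReal C * b n := by
    intro n
    -- pointwise comparison
    have hfg : ∀ r ∈ J n, ∀ r' ∈ J (n + 1),
        f r ≤ 4 ^ |β| * (G r' * (1 - r') ^ β * (1 - r' * ρ) ^ (-γ)) := by
      intro r hr r' hr'
      have hrI := hJsub n hr
      have hrI' := hJsub (n + 1) hr'
      have hrr' : r ≤ r' := le_of_lt (lt_of_lt_of_le hr.2 hr'.1)
      have hu'pos : (0:ℝ) < 1 - r' := by linarith [hrI'.2]
      have hupos : (0:ℝ) < 1 - r := by linarith [hrI.2]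
      have hu'le : 1 - r' ≤ 1 - r := by linarith
      have hule : 1 - r ≤ e n := by have := hr.1; linarith
      have hu'gt : e (n + 2) < 1 - r' := by have := hr'.2; rw [he_succ (n+1)] at *; linarith [hr'.2]
      have hu4 : 1 - r ≤ 4 * (1 - r') := by
        have h1 : e n = 4 * e (n + 2) := by rw [he_succ (n+1), he_succ n]; ring
        nlinarith
      have hG1 : G r ≤ G r' := hG hrI hrI' hrr'
      have hG0' : 0 ≤ G r' := hG0 r' hrI'
      have hbeta : (1 - r) ^ β ≤ 4 ^ |β| * (1 - r') ^ β := by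
        have h4 : (1:ℝ) ≤ 4 ^ |β| := Real.one_le_rpow (by norm_num) (abs_nonneg β)
        rcases le_or_gt 0 β with hβ0 | hβ0
        · calc (1 - r) ^ β ≤ (4 * (1 - r')) ^ β :=
                Real.rpow_le_rpow hupos.le hu4 hβ0
            _ = 4 ^ β * (1 - r') ^ β := Real.mul_rpow (by norm_num) hu'pos.le
            _ ≤ 4 ^ |β| * (1 - r') ^ β := by
                have : (4:ℝ) ^ β ≤ 4 ^ |β| :=
                  Real.rpow_le_rpow_of_exponent_le (by norm_num) (le_abs_self β)
                exact mul_le_mul_of_nonneg_right this (Real.rpow_nonneg hu'pos.le β)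
        · calc (1 - r) ^ β ≤ (1 - r') ^ β :=
                Real.rpow_le_rpow_of_nonpos hu'pos hu'le hβ0.le
            _ ≤ 4 ^ |β| * (1 - r') ^ β :=
                le_mul_of_one_le_left (Real.rpow_nonneg hu'pos.le β) h4
      have hvpos' : (0:ℝ) < 1 - r' * ρ := by nlinarith [hrI'.1, hrI'.2]
      have hv : 1 - r' * ρ ≤ 1 - r * ρ := by nlinarith
      have hgam : (1 - r * ρ) ^ (-γ) ≤ (1 - r' * ρ) ^ (-γ) :=
        Real.rpow_le_rpow_of_nonpos hvpos' hv (by linarith)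
      have hnn1 : 0 ≤ (1 - r) ^ β := Real.rpow_nonneg hupos.le β
      have hnn2 : 0 ≤ (1 - r * ρ) ^ (-γ) := Real.rpow_nonneg (by nlinarith [hrI.1]) _
      have hnn3 : 0 ≤ (1 - r' * ρ) ^ (-γ) := Real.rpow_nonneg hvpos'.le _
      have hG0r : 0 ≤ G r := hG0 r hrI
      calc f r = G r * (1 - r) ^ β * (1 - r * ρ) ^ (-γ) := rfl
        _ ≤ (G r' * (4 ^ |β| * (1 - r') ^ β)) * (1 - r' * ρ) ^ (-γ) := by
            refine mul_le_mul ?_ hgam hnn2 ?_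
            · exact mul_le_mul hG1 hbeta hnn1 hG0'
            · positivity
        _ = 4 ^ |β| * (G r' * (1 - r') ^ β * (1 - r' * ρ) ^ (-γ)) := by ring
    -- volume facts
    have hvolJ : ∀ m, volume (J m) = ENNReal.ofReal (e (m + 1)) := by
      intro m
      rw [hJ]
      simp only [Real.volume_Ico]
      congr 1
      rw [he_succ m]; ring
    -- bound a n by a constant times values on J (n+1)
    have haf : ∀ r' ∈ J (n + 1),
        a n ≤ ENNReal.ofReal (e (n + 1) * (4 ^ |β| * (G r' * (1 - r') ^ β * (1 - r' * ρ) ^ (-γ)))) := by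
      intro r' hr'
      calc a n ≤ ∫⁻ _ in J n,
            ENNReal.ofReal (4 ^ |β| * (G r' * (1 - r') ^ β * (1 - r' * ρ) ^ (-γ))) :=
            setLIntegral_mono' measurableSet_Ico
              (fun r hr => ENNReal.ofReal_le_ofReal (hfg r hr r' hr'))
        _ = ENNReal.ofReal (4 ^ |β| * (G r' * (1 - r') ^ β * (1 - r' * ρ) ^ (-γ))) * volume (J n) :=
            setLIntegral_const _ _
        _ = ENNReal.ofReal (e (n + 1) * (4 ^ |β| * (G r' * (1 - r') ^ β * (1 - r' * ρ) ^ (-γ)))) := by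
            rw [hvolJ n, ← ENNReal.ofReal_mul' (he_pos (n + 1)).le]
            congr 1; ring
    -- real inequality giving the rpow bound
    have hreal : ∀ r' ∈ J (n + 1),
        (e (n + 1) * (4 ^ |β| * (G r' * (1 - r') ^ β * (1 - r' * ρ) ^ (-γ)))) ^ p
          ≤ C * e (n + 2) * g r' := by
      intro r' hr'
      have hrI' := hJsub (n + 1) hr'
      have hu'pos : (0:ℝ) < 1 - r' := by linarith [hrI'.2]
      have hu'le : 1 - r' ≤ e (n + 1) := by have := hr'.1; linarith
      have hvpos' : (0:ℝ) < 1 - r' * ρ := by nlinarith [hrI'.1, hrI'.2]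
      have hG0' : 0 ≤ G r' := hG0 r' hrI'
      have hA : (0:ℝ) < 4 ^ |β| := by positivity
      have expand :
          (e (n + 1) * (4 ^ |β| * (G r' * (1 - r') ^ β * (1 - r' * ρ) ^ (-γ)))) ^ p
            = e (n + 1) ^ p * (4 ^ |β|) ^ p * G r' ^ p * (1 - r') ^ (β * p)
                * (1 - r' * ρ) ^ (-(γ * p)) := by
        rw [Real.mul_rpow (he_pos (n+1)).le (by positivity),
            Real.mul_rpow hA.le (by positivity),
            Real.mul_rpow (by positivity) (Real.rpow_nonneg hvpos'.le _),
            Real.mul_rpow hG0' (Real.rpow_nonneg hu'pos.le _),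
            ← Real.rpow_mul hu'pos.le, ← Real.rpow_mul hvpos'.le]
        ring_nf
      rw [expand]
      have hsplit : (1 - r') ^ (β * p) = (1 - r') ^ (β * p + p - 1) * (1 - r') ^ (1 - p) := by
        rw [← Real.rpow_add hu'pos]; ring_nf
      have hup : (1 - r') ^ (1 - p) ≤ e (n + 1) ^ (1 - p) :=
        Real.rpow_le_rpow hu'pos.le hu'le (by linarith)
      have heep : e (n + 1) ^ p * e (n + 1) ^ (1 - p) = 2 * e (n + 2) := by
        rw [← Real.rpow_add (he_pos (n + 1)), show p + (1 - p) = 1 by ring,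
          Real.rpow_one, he_succ (n + 1)]
        ring
      calc e (n + 1) ^ p * (4 ^ |β|) ^ p * G r' ^ p * (1 - r') ^ (β * p)
              * (1 - r' * ρ) ^ (-(γ * p))
          = e (n + 1) ^ p * (4 ^ |β|) ^ p * G r' ^ p
              * ((1 - r') ^ (β * p + p - 1) * (1 - r') ^ (1 - p))
              * (1 - r' * ρ) ^ (-(γ * p)) := by rw [hsplit]
        _ ≤ e (n + 1) ^ p * (4 ^ |β|) ^ p * G r' ^ p
              * ((1 - r') ^ (β * p + p - 1) * e (n + 1) ^ (1 - p))
              * (1 - r' * ρ) ^ (-(γ * p)) := by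
            refine mul_le_mul_of_nonneg_right
              (mul_le_mul_of_nonneg_left
                (mul_le_mul_of_nonneg_left hup (Real.rpow_nonneg hu'pos.le _))
                (by positivity))
              (Real.rpow_nonneg hvpos'.le _)
        _ = (e (n + 1) ^ p * e (n + 1) ^ (1 - p)) * (4 ^ |β|) ^ p * g r' := by
            rw [hg]; ring
        _ = C * e (n + 2) * g r' := by rw [heep, hC]; ring
    -- combine
    have hg0 : ∀ r' ∈ J (n + 1), 0 ≤ g r' := by
      intro r' hr'
      have hrI' := hJsub (n + 1) hr'
      have hu'pos : (0:ℝ) < 1 - r' := by linarith [hrI'.2]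
      have hvpos' : (0:ℝ) < 1 - r' * ρ := by nlinarith [hrI'.1, hrI'.2]
      have hG0' : 0 ≤ G r' := hG0 r' hrI'
      rw [hg]
      positivity
    have hap : ∀ r' ∈ J (n + 1),
        a n ^ p ≤ ENNReal.ofReal (C * e (n + 2)) * ENNReal.ofReal (g r') := by
      intro r' hr'
      calc a n ^ p
          ≤ (ENNReal.ofReal (e (n + 1) * (4 ^ |β| * (G r' * (1 - r') ^ β * (1 - r' * ρ) ^ (-γ))))) ^ p :=
            ENNReal.rpow_le_rpow (haf r' hr') hp0.le
        _ = ENNReal.ofReal ((e (n + 1) * (4 ^ |β| * (G r' * (1 - r') ^ β * (1 - r' * ρ) ^ (-γ)))) ^ p) := by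
            rw [ENNReal.ofReal_rpow_of_nonneg ?_ hp0.le]
            have hrI' := hJsub (n + 1) hr'
            have hu'pos : (0:ℝ) < 1 - r' := by linarith [hrI'.2]
            have hvpos' : (0:ℝ) < 1 - r' * ρ := by nlinarith [hrI'.1, hrI'.2]
            have hG0' : 0 ≤ G r' := hG0 r' hrI'
            positivity
        _ ≤ ENNReal.ofReal (C * e (n + 2) * g r') :=
            ENNReal.ofReal_le_ofReal (hreal r' hr')
        _ = ENNReal.ofReal (C * e (n + 2)) * ENNReal.ofReal (g r') :=
            ENNReal.ofReal_mul (by positivity)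
    have hint : ENNReal.ofReal (e (n + 2)) * a n ^ p
        ≤ ENNReal.ofReal (C * e (n + 2)) * b n := by
      calc ENNReal.ofReal (e (n + 2)) * a n ^ p
          = ∫⁻ _ in J (n + 1), a n ^ p := by
            rw [setLIntegral_const, hvolJ (n + 1), mul_comm]
        _ ≤ ∫⁻ r' in J (n + 1), ENNReal.ofReal (C * e (n + 2)) * ENNReal.ofReal (g r') :=
            setLIntegral_mono' measurableSet_Ico hap
        _ = ENNReal.ofReal (C * e (n + 2)) * b n := by
            rw [hb, lintegral_const_mul' _ _ ENNReal.ofReal_ne_top]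
    have : ENNReal.ofReal (e (n + 2)) * a n ^ p
        ≤ ENNReal.ofReal (e (n + 2)) * (ENNReal.ofReal C * b n) := by
      calc ENNReal.ofReal (e (n + 2)) * a n ^ p
          ≤ ENNReal.ofReal (C * e (n + 2)) * b n := hint
        _ = ENNReal.ofReal (e (n + 2)) * (ENNReal.ofReal C * b n) := by
            rw [ENNReal.ofReal_mul hCpos.le, mul_comm (ENNReal.ofReal C), mul_assoc]
    exact (ENNReal.mul_le_mul_iff_right
      (by simp [ENNReal.ofReal_eq_zero, not_le, he_pos (n + 2)])
      ENNReal.ofReal_ne_top).mp this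
  -- Step 3 : tsum of b ≤ RHS integral
  have step3 : ∑' n, b n ≤ ∫⁻ r in Ioo (0:ℝ) 1, ENNReal.ofReal (g r) := by
    have hdisj' : Pairwise (Function.onFun Disjoint (fun n => J (n + 1))) := by
      intro m n hmn
      exact hdisj (by omega)
    have hsub : (⋃ n, J (n + 1)) ⊆ Ioo (0:ℝ) 1 := by
      intro x hx
      obtain ⟨m, hm⟩ := mem_iUnion.mp hx
      have h1 : e (m + 1) ≤ e 1 := he_anti 1 (m + 1) (by omega)
      have he1 : e 1 = 1 / 2 := by simp [he]
      have := (hJsub (m + 1) hm).2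
      constructor
      · have := hm.1; rw [he1] at h1; linarith
      · exact this
    calc ∑' n, b n = ∫⁻ r in ⋃ n, J (n + 1), ENNReal.ofReal (g r) :=
          (lintegral_iUnion (fun n => measurableSet_Ico) hdisj' _).symm
      _ ≤ ∫⁻ r in Ioo (0:ℝ) 1, ENNReal.ofReal (g r) := lintegral_mono_set hsub
  -- assemble
  calc (∫⁻ r in Ioo (0:ℝ) 1, ENNReal.ofReal (f r)) ^ p
      ≤ (∑' n, a n) ^ p := ENNReal.rpow_le_rpow step1 hp0.le
    _ ≤ ∑' n, a n ^ p := my_tsum_rpow_le hp0 hp1 a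
    _ ≤ ∑' n, ENNReal.ofReal C * b n := ENNReal.tsum_le_tsum step2
    _ = ENNReal.ofReal C * ∑' n, b n := ENNReal.tsum_mul_left
    _ ≤ ENNReal.ofReal C * ∫⁻ r in Ioo (0:ℝ) 1, ENNReal.ofReal (g r) :=
        mul_le_mul_right step3 _

/-- Lemma 2: for `β > -1`, `s > -1`, `γ > 0`, `0 < p ≤ 1` there is `C`
such that for every nonnegative nondecreasing `G` on `[0,1)`:
`∫₀¹ (∫₀¹ G(r)(1-r)^β (1-rρ)^{-γ} dr)^p (1-ρ)^s dρ
  ≤ C ∫₀¹∫₀¹ G(r)^p (1-r)^{βp+p-1} (1-rρ)^{-γp} (1-ρ)^s dρ dr`. -/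
theorem stmt4 (β s γ p : ℝ) (hβ : -1 < β) (hs : -1 < s) (hγ : 0 < γ)
    (hp0 : 0 < p) (hp1 : p ≤ 1) :
    ∃ C : ℝ, 0 < C ∧ ∀ G : ℝ → ℝ, MonotoneOn G (Ico (0:ℝ) 1) →
      (∀ r ∈ Ico (0:ℝ) 1, 0 ≤ G r) →
      (∫⁻ ρ in Ioo (0:ℝ) 1,
          (∫⁻ r in Ioo (0:ℝ) 1,
              ENNReal.ofReal (G r * (1 - r) ^ β * (1 - r * ρ) ^ (-γ))) ^ p *
            ENNReal.ofReal ((1 - ρ) ^ s)) ≤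
        ENNReal.ofReal C *
          ∫⁻ r in Ioo (0:ℝ) 1, ∫⁻ ρ in Ioo (0:ℝ) 1,
            ENNReal.ofReal
              (G r ^ p * (1 - r) ^ (β * p + p - 1) * (1 - r * ρ) ^ (-(γ * p)) *
                (1 - ρ) ^ s) := by
  refine ⟨2 * (4 ^ |β|) ^ p, by positivity, ?_⟩
  intro G hG hG0
  set C : ℝ := 2 * (4 ^ |β|) ^ p with hC
  set μ : Measure ℝ := volume.restrict (Ioo (0:ℝ) 1) with hμ
  set F : ℝ → ℝ → ℝ≥0∞ := fun ρ r =>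
    ENNReal.ofReal
      (G r ^ p * (1 - r) ^ (β * p + p - 1) * (1 - r * ρ) ^ (-(γ * p)) * (1 - ρ) ^ s) with hF
  have hGae : AEMeasurable G μ :=
    aemeasurable_restrict_of_monotoneOn measurableSet_Ioo (hG.mono Ioo_subset_Ico_self)
  have hFm : AEMeasurable (Function.uncurry F) (μ.prod μ) := by
    apply ENNReal.measurable_ofReal.comp_aemeasurable
    have h1 : AEMeasurable (fun q : ℝ × ℝ => G q.2 ^ p) (μ.prod μ) :=
      ((measurable_id.pow_const p).comp_aemeasurable hGae).comp_snd
    have h2 : Measurable fun q : ℝ × ℝ => (1 - q.2) ^ (β * p + p - 1) :=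
      (measurable_const.sub measurable_snd).pow_const _
    have h3 : Measurable fun q : ℝ × ℝ => (1 - q.2 * q.1) ^ (-(γ * p)) :=
      (measurable_const.sub (measurable_snd.mul measurable_fst)).pow_const _
    have h4 : Measurable fun q : ℝ × ℝ => (1 - q.1) ^ s :=
      (measurable_const.sub measurable_fst).pow_const _
    exact ((h1.mul h2.aemeasurable).mul h3.aemeasurable).mul h4.aemeasurable
  have key : ∀ ρ ∈ Ioo (0:ℝ) 1,
      (∫⁻ r in Ioo (0:ℝ) 1,
          ENNReal.ofReal (G r * (1 - r) ^ β * (1 - r * ρ) ^ (-γ))) ^ p *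
        ENNReal.ofReal ((1 - ρ) ^ s)
        ≤ ENNReal.ofReal C * ∫⁻ r in Ioo (0:ℝ) 1, F ρ r := by
    intro ρ hρ
    have hA := my_keyA β γ p hγ hp0 hp1 G hG hG0 hρ
    calc (∫⁻ r in Ioo (0:ℝ) 1,
            ENNReal.ofReal (G r * (1 - r) ^ β * (1 - r * ρ) ^ (-γ))) ^ p *
          ENNReal.ofReal ((1 - ρ) ^ s)
        ≤ (ENNReal.ofReal C *
            ∫⁻ r in Ioo (0:ℝ) 1,
              ENNReal.ofReal (G r ^ p * (1 - r) ^ (β * p + p - 1) * (1 - r * ρ) ^ (-(γ * p)))) *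
          ENNReal.ofReal ((1 - ρ) ^ s) := mul_le_mul_left hA _
      _ = ENNReal.ofReal C *
            ((∫⁻ r in Ioo (0:ℝ) 1,
              ENNReal.ofReal (G r ^ p * (1 - r) ^ (β * p + p - 1) * (1 - r * ρ) ^ (-(γ * p)))) *
            ENNReal.ofReal ((1 - ρ) ^ s)) := by rw [mul_assoc]
      _ = ENNReal.ofReal C * ∫⁻ r in Ioo (0:ℝ) 1, F ρ r := by
          rw [← lintegral_mul_const' _ _ ENNReal.ofReal_ne_top]
          congr 1
          refine setLIntegral_congr_fun measurableSet_Ioo (fun r hr => ?_)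
          rw [hF]
          rw [← ENNReal.ofReal_mul]
          have h1 : (0:ℝ) < 1 - r := by have := hr.2; linarith
          have h2 : (0:ℝ) < 1 - r * ρ := by
            have := hr.1; have := hr.2; have := hρ.1; have := hρ.2; nlinarith
          have hG0' : 0 ≤ G r := hG0 r ⟨hr.1.le, hr.2⟩
          positivity
  calc (∫⁻ ρ in Ioo (0:ℝ) 1,
          (∫⁻ r in Ioo (0:ℝ) 1,
              ENNReal.ofReal (G r * (1 - r) ^ β * (1 - r * ρ) ^ (-γ))) ^ p *
            ENNReal.ofReal ((1 - ρ) ^ s))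
      ≤ ∫⁻ ρ in Ioo (0:ℝ) 1, ENNReal.ofReal C * ∫⁻ r in Ioo (0:ℝ) 1, F ρ r :=
        setLIntegral_mono' measurableSet_Ioo key
    _ = ENNReal.ofReal C * ∫⁻ ρ in Ioo (0:ℝ) 1, ∫⁻ r in Ioo (0:ℝ) 1, F ρ r :=
        lintegral_const_mul' _ _ ENNReal.ofReal_ne_top
    _ = ENNReal.ofReal C * ∫⁻ r in Ioo (0:ℝ) 1, ∫⁻ ρ in Ioo (0:ℝ) 1, F ρ r := by
        rw [lintegral_lintegral_swap hFm]
end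
end

section
/- Let m > n-1, 0 ≤ r < 1 and y' a point on the unit sphere S in ℝⁿ. Then ∫_S |r x' - y'|^{-m} dx' ≤ C (1-r)^{-(m-n+1)}, where C depends only on m and n. -/
open MeasureTheory Metric Set
open scoped ENNReal NNReal InnerProductSpace

set_option maxHeartbeats 1000000

noncomputable section

lemma meas_rpow_of_cont {X : Type*} [TopologicalSpace X] [MeasurableSpace X] [BorelSpace X]
    (g : X → ℝ) (hg : Continuous g) (hg0 : ∀ x, 0 ≤ g x) (c : ℝ) (hc : c ≠ 0) :
    Measurable fun x => g x ^ c := by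
  have heq : (fun x => g x ^ c)
      = fun x => ({y : X | 0 < g y}.indicator (fun x => Real.exp (Real.log (g x) * c))) x := by
    funext x
    by_cases h : 0 < g x
    · rw [indicator_of_mem (show x ∈ {y : X | 0 < g y} from h), Real.rpow_def_of_pos h]
    · have h0 : g x = 0 := le_antisymm (not_lt.mp h) (hg0 x)
      rw [indicator_of_notMem (show x ∉ {y : X | 0 < g y} from h), h0, Real.zero_rpow hc]
  rw [heq]
  exact Measurable.indicator
    (Real.measurable_exp.comp ((Real.measurable_log.comp hg.measurable).mul_const c))
    (isOpen_lt continuous_const hg).measurableSet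


lemma sqrt_lip {a b : ℝ} (ha0 : 0 ≤ a) (ha : a^2 ≤ 3/4) (hb0 : 0 ≤ b) (hb : b^2 ≤ 3/4) :
    |Real.sqrt (1-a^2) - Real.sqrt (1-b^2)| ≤ 2*|a-b| := by
  set s := Real.sqrt (1-a^2) with hs
  set t := Real.sqrt (1-b^2) with ht
  have hs2 : s^2 = 1-a^2 := Real.sq_sqrt (by nlinarith)
  have ht2 : t^2 = 1-b^2 := Real.sq_sqrt (by nlinarith)
  have hs1 : (1:ℝ)/2 ≤ s := by
    rw [hs, show (1:ℝ)/2 = Real.sqrt (1/4) by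
      rw [show (1:ℝ)/4 = (1/2)^2 by norm_num, Real.sqrt_sq]; norm_num]
    exact Real.sqrt_le_sqrt (by nlinarith)
  have ht1 : (1:ℝ)/2 ≤ t := by
    rw [ht, show (1:ℝ)/2 = Real.sqrt (1/4) by
      rw [show (1:ℝ)/4 = (1/2)^2 by norm_num, Real.sqrt_sq]; norm_num]
    exact Real.sqrt_le_sqrt (by nlinarith)
  have ha1 : a ≤ 1 := by nlinarith
  have hb1 : b ≤ 1 := by nlinarith
  have hst : (1:ℝ) ≤ s + t := by linarith
  have hkey : (s-t)*(s+t) = (b-a)*(b+a) := by linear_combination hs2 - ht2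
  rcases abs_cases (s - t) with ⟨h1, h2⟩ | ⟨h1, h2⟩ <;> rcases abs_cases (a - b) with ⟨h3, h4⟩ | ⟨h3, h4⟩ <;>
    rw [h1, h3] <;> nlinarith [hkey, hst, ha1, hb1]

lemma cap_small (n : ℕ) (hn : 2 ≤ n) (e : E n) (he : ‖e‖ = 1) :
    ∃ A : ℝ≥0∞, A ≠ ∞ ∧ ∀ t : ℝ, 0 < t → t ≤ 1 →
      μH[(n:ℝ)-1] (sphere (0:E n) 1 ∩ closedBall e t) ≤ A * ENNReal.ofReal (t ^ (n-1 : ℕ)) := by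
  have hd : ((n:ℝ)-1) = ((n - 1 : ℕ) : ℝ) := by
    have : (1:ℕ) ≤ n := by omega
    push_cast [Nat.cast_sub this]; ring
  set H := (ℝ ∙ e)ᗮ with hH
  have hene : e ≠ 0 := by intro h; rw [h] at he; simp at he
  haveI : Fact (Module.finrank ℝ (E n) = (n-1) + 1) :=
    ⟨by rw [finrank_euclideanSpace_fin]; omega⟩
  have hfr : Module.finrank ℝ ↥H = n - 1 := Submodule.finrank_orthogonal_span_singleton hene
  haveI : (μH[((n-1:ℕ):ℝ)] : Measure ↥H).IsAddHaarMeasure := by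
    rw [show ((n-1:ℕ):ℝ) = ((Module.finrank ℝ ↥H : ℕ) : ℝ) by rw [hfr]]
    exact isAddHaarMeasure_hausdorffMeasure
  set G : ↥H → E n := fun u => (u : E n) + Real.sqrt (1 - ‖u‖^2) • e with hG
  set D : Set ↥H := {u | ‖u‖^2 ≤ 3/4} with hDdef
  have hGlip : LipschitzOnWith 3 G D := by
    apply LipschitzOnWith.of_dist_le_mul
    intro u hu v hv
    have h1 : dist (G u) (G v) ≤ dist u v + |Real.sqrt (1-‖u‖^2) - Real.sqrt (1-‖v‖^2)| := by
      rw [dist_eq_norm, dist_eq_norm, hG]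
      calc ‖((u:E n) + Real.sqrt (1-‖u‖^2) • e) - ((v:E n) + Real.sqrt (1-‖v‖^2) • e)‖
          = ‖((u:E n) - (v:E n)) + (Real.sqrt (1-‖u‖^2) - Real.sqrt (1-‖v‖^2)) • e‖ := by
            rw [sub_smul]; congr 1; abel
        _ ≤ ‖(u:E n) - (v:E n)‖ + ‖(Real.sqrt (1-‖u‖^2) - Real.sqrt (1-‖v‖^2)) • e‖ :=
            norm_add_le _ _
        _ = ‖u - v‖ + |Real.sqrt (1-‖u‖^2) - Real.sqrt (1-‖v‖^2)| := by
            rw [norm_smul, Real.norm_eq_abs, he, mul_one]; norm_num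
    have h2 : |Real.sqrt (1-‖u‖^2) - Real.sqrt (1-‖v‖^2)| ≤ 2 * |‖u‖ - ‖v‖| :=
      sqrt_lip (norm_nonneg _) hu (norm_nonneg _) hv
    have h3 : |‖u‖ - ‖v‖| ≤ ‖u - v‖ := abs_norm_sub_norm_le _ _
    rw [dist_eq_norm, dist_eq_norm]
    rw [dist_eq_norm, dist_eq_norm] at h1
    push_cast
    linarith
  refine ⟨((3:ℝ≥0):ℝ≥0∞)^(((n-1:ℕ):ℝ)) * (μH[((n-1:ℕ):ℝ)] : Measure ↥H) (ball 0 1), ?_, ?_⟩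
  · apply ENNReal.mul_ne_top
    · exact (ENNReal.rpow_lt_top_of_nonneg (by positivity) (by norm_num)).ne
    · exact ((measure_mono ball_subset_closedBall).trans_lt
        (isCompact_closedBall _ _).measure_lt_top).ne
  intro t ht0 ht1
  rw [hd]
  have hsub : sphere (0:E n) 1 ∩ closedBall e t ⊆ G '' (D ∩ closedBall 0 t) := by
    rintro x ⟨hx1, hx2⟩
    rw [mem_sphere_zero_iff_norm] at hx1
    rw [mem_closedBall, dist_eq_norm] at hx2
    set a : ℝ := ⟪e, x⟫_ℝ with hadef
    have hxe : ‖x - e‖^2 = 2 - 2*a := by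
      rw [norm_sub_sq_real, hx1, he, real_inner_comm]; ring
    have ha1' : a ≤ 1 := by
      have := real_inner_le_norm e x; rw [he, hx1] at this; simpa using this
    have ha12 : 1/2 ≤ a := by nlinarith [norm_nonneg (x - e), sq_nonneg (‖x-e‖)]
    have hu0 : x - a • e ∈ H := by
      rw [hH, Submodule.mem_orthogonal_singleton_iff_inner_right]
      rw [inner_sub_right, real_inner_smul_right, real_inner_self_eq_norm_sq, he]
      simp [hadef]
    set u : ↥H := ⟨x - a • e, hu0⟩ with hu
    have hnu : ‖u‖^2 = 1 - a^2 := by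
      have : ‖u‖ = ‖x - a • e‖ := rfl
      rw [this, norm_sub_sq_real, norm_smul, hx1, he, real_inner_smul_right,
        Real.norm_eq_abs, abs_of_nonneg (by linarith : (0:ℝ) ≤ a)]
      rw [real_inner_comm]
      rw [← hadef]; ring
    have hDmem : u ∈ D := by rw [hDdef]; simp only [mem_setOf_eq, hnu]; nlinarith
    have hut : ‖u‖ ≤ t := by nlinarith [norm_nonneg u, norm_nonneg (x - e), hxe, hnu, hx2]
    refine ⟨u, ⟨hDmem, ?_⟩, ?_⟩
    · rw [mem_closedBall, dist_zero_right]; exact hut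
    · show (u : E n) + Real.sqrt (1 - ‖u‖^2) • e = x
      rw [hnu, show 1 - (1 - a^2) = a^2 by ring, Real.sqrt_sq (by linarith : (0:ℝ) ≤ a)]
      rw [hu]
      show (x - a • e) + a • e = x
      abel
  calc μH[((n-1:ℕ):ℝ)] (sphere (0:E n) 1 ∩ closedBall e t)
      ≤ μH[((n-1:ℕ):ℝ)] (G '' (D ∩ closedBall 0 t)) := measure_mono hsub
    _ ≤ ((3:ℝ≥0):ℝ≥0∞)^(((n-1:ℕ):ℝ)) * (μH[((n-1:ℕ):ℝ)] : Measure ↥H) (D ∩ closedBall 0 t) := by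
        exact (hGlip.mono inter_subset_left).hausdorffMeasure_image_le (by positivity)
    _ ≤ ((3:ℝ≥0):ℝ≥0∞)^(((n-1:ℕ):ℝ)) * (ENNReal.ofReal (t ^ (n-1:ℕ)) * (μH[((n-1:ℕ):ℝ)] : Measure ↥H) (ball 0 1)) := by
        gcongr
        calc (μH[((n-1:ℕ):ℝ)] : Measure ↥H) (D ∩ closedBall 0 t) ≤ (μH[((n-1:ℕ):ℝ)] : Measure ↥H) (closedBall 0 t) := measure_mono inter_subset_right
          _ = ENNReal.ofReal (t ^ Module.finrank ℝ ↥H) * (μH[((n-1:ℕ):ℝ)] : Measure ↥H) (ball 0 1) :=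
              Measure.addHaar_closedBall _ 0 ht0.le
          _ = ENNReal.ofReal (t ^ (n-1:ℕ)) * (μH[((n-1:ℕ):ℝ)] : Measure ↥H) (ball 0 1) := by rw [hfr]
    _ = ((3:ℝ≥0):ℝ≥0∞)^(((n-1:ℕ):ℝ)) * (μH[((n-1:ℕ):ℝ)] : Measure ↥H) (ball 0 1) * ENNReal.ofReal (t ^ (n-1:ℕ)) := by ring

lemma cap_bound (n : ℕ) (hn : 2 ≤ n) :
    ∃ A : ℝ≥0∞, A ≠ ∞ ∧ ∀ y' ∈ sphere (0:E n) 1, ∀ t : ℝ, 0 < t →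
      μH[(n:ℝ)-1] (sphere (0:E n) 1 ∩ closedBall y' t) ≤ A * ENNReal.ofReal (t ^ (n-1 : ℕ)) := by
  have hn2 : (2:ℝ) ≤ (n:ℝ) := by exact_mod_cast hn
  have hd0 : (0:ℝ) ≤ (n:ℝ)-1 := by linarith
  have hi : Nonempty (Fin n) := ⟨⟨0, by omega⟩⟩
  set e : E n := EuclideanSpace.single (⟨0, by omega⟩ : Fin n) (1:ℝ) with hedef
  have he : ‖e‖ = 1 := by rw [hedef, EuclideanSpace.norm_single]; norm_num
  obtain ⟨A₁, hA₁top, hA₁⟩ := cap_small n hn e he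
  -- transfer to arbitrary center via reflection
  have htrans : ∀ y' ∈ sphere (0:E n) 1, ∀ t : ℝ,
      μH[(n:ℝ)-1] (sphere (0:E n) 1 ∩ closedBall y' t)
        = μH[(n:ℝ)-1] (sphere (0:E n) 1 ∩ closedBall e t) := by
    intro y' hy' t
    have hy'n : ‖y'‖ = 1 := mem_sphere_zero_iff_norm.mp hy'
    set R := Submodule.reflection (ℝ ∙ (y' - e))ᗮ with hR
    have hRy : R y' = e := Submodule.reflection_sub (by rw [hy'n, he])
    have hRe : R e = y' := by
      have h2 := congrArg R hRy
      rw [hR, Submodule.reflection_reflection] at h2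
      exact h2.symm
    have himg : sphere (0:E n) 1 ∩ closedBall y' t
        = R '' (sphere (0:E n) 1 ∩ closedBall e t) := by
      rw [image_inter R.injective]
      congr 1
      · ext x
        simp only [mem_image, mem_sphere_zero_iff_norm]
        constructor
        · rintro hx
          refine ⟨R.symm x, ?_, R.apply_symm_apply x⟩
          rw [← hx, ← R.norm_map (R.symm x), R.apply_symm_apply]
        · rintro ⟨z, hz, rfl⟩
          rw [R.norm_map]; exact hz
      · ext x
        simp only [mem_image, mem_closedBall]
        constructor
        · intro hx
          refine ⟨R.symm x, ?_, R.apply_symm_apply x⟩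
          rw [dist_eq_norm] at hx ⊢
          rw [← R.norm_map (R.symm x - e), map_sub, R.apply_symm_apply, hRe]
          exact hx
        · rintro ⟨z, hz, rfl⟩
          rw [dist_eq_norm] at hz ⊢
          rw [← hRe, ← map_sub, R.norm_map]
          exact hz
    rw [himg, R.isometry.hausdorffMeasure_image (Or.inl hd0)]
  -- finiteness of the whole sphere measure
  have hVfin : μH[(n:ℝ)-1] (sphere (0:E n) 1) < ∞ := by
    obtain ⟨s, hs⟩ := (isCompact_sphere (0:E n) 1).elim_finite_subcover
      (fun y : E n => ball y (1/2)) (fun _ => isOpen_ball)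
      (by intro x hx; exact mem_iUnion.mpr ⟨x, mem_ball_self (by norm_num)⟩)
    calc μH[(n:ℝ)-1] (sphere (0:E n) 1)
        ≤ ∑ y ∈ s, μH[(n:ℝ)-1] (sphere (0:E n) 1 ∩ closedBall y (1/2)) := by
          refine le_trans (measure_mono ?_) (measure_biUnion_finset_le s _)
          intro x hx
          obtain ⟨y, hy, hxy⟩ := mem_iUnion₂.mp (hs hx)
          exact mem_iUnion₂.mpr ⟨y, hy, hx, ball_subset_closedBall hxy⟩
      _ ≤ ∑ _y ∈ s, A₁ * ENNReal.ofReal ((1:ℝ) ^ (n-1:ℕ)) := by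
          apply Finset.sum_le_sum
          intro y hy
          rcases eq_empty_or_nonempty (sphere (0:E n) 1 ∩ closedBall y (1/2)) with hemp | hne
          · rw [hemp]; simp
          · obtain ⟨x, hx1, hx2⟩ := hne
            calc μH[(n:ℝ)-1] (sphere (0:E n) 1 ∩ closedBall y (1/2))
                ≤ μH[(n:ℝ)-1] (sphere (0:E n) 1 ∩ closedBall x 1) := by
                  apply measure_mono
                  rintro z ⟨hz1, hz2⟩
                  refine ⟨hz1, ?_⟩
                  rw [mem_closedBall] at *
                  calc dist z x ≤ dist z y + dist y x := dist_triangle _ _ _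
                    _ ≤ 1/2 + 1/2 := add_le_add hz2 (dist_comm x y ▸ hx2)
                    _ = 1 := by norm_num
              _ = μH[(n:ℝ)-1] (sphere (0:E n) 1 ∩ closedBall e 1) := htrans x hx1 1
              _ ≤ A₁ * ENNReal.ofReal ((1:ℝ) ^ (n-1:ℕ)) := hA₁ 1 one_pos le_rfl
      _ < ∞ := by
          apply ENNReal.sum_lt_top.mpr
          intro y hy
          exact ENNReal.mul_lt_top hA₁top.lt_top ENNReal.ofReal_lt_top
  refine ⟨A₁ + μH[(n:ℝ)-1] (sphere (0:E n) 1), by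
      exact ENNReal.add_ne_top.mpr ⟨hA₁top, hVfin.ne⟩, ?_⟩
  intro y' hy' t ht0
  rcases le_or_gt t 1 with ht1 | ht1
  · rw [htrans y' hy' t]
    calc μH[(n:ℝ)-1] (sphere (0:E n) 1 ∩ closedBall e t)
        ≤ A₁ * ENNReal.ofReal (t ^ (n-1:ℕ)) := hA₁ t ht0 ht1
      _ ≤ (A₁ + μH[(n:ℝ)-1] (sphere (0:E n) 1)) * ENNReal.ofReal (t ^ (n-1:ℕ)) := by
          gcongr; exact le_self_add
  · have h1 : (1:ℝ≥0∞) ≤ ENNReal.ofReal (t ^ (n-1:ℕ)) := by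
      rw [show (1:ℝ≥0∞) = ENNReal.ofReal 1 by simp]
      exact ENNReal.ofReal_le_ofReal (one_le_pow₀ ht1.le)
    calc μH[(n:ℝ)-1] (sphere (0:E n) 1 ∩ closedBall y' t)
        ≤ μH[(n:ℝ)-1] (sphere (0:E n) 1) := measure_mono inter_subset_left
      _ = μH[(n:ℝ)-1] (sphere (0:E n) 1) * 1 := (mul_one _).symm
      _ ≤ (A₁ + μH[(n:ℝ)-1] (sphere (0:E n) 1)) * ENNReal.ofReal (t ^ (n-1:ℕ)) := by
          gcongr; exact le_add_self

/-- for `m > n-1` there is `C = C(m,n)` such that for all `0 ≤ r < 1`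
and `y'` on the unit sphere, `∫_S |r x' - y'|^{-m} dx' ≤ C (1-r)^{-(m-n+1)}`. -/
theorem stmt5 (n : ℕ) (hn : 2 ≤ n) (m : ℝ) (hm : (n : ℝ) - 1 < m) :
    ∃ C : ℝ, 0 < C ∧ ∀ r ∈ Ico (0:ℝ) 1, ∀ y' ∈ sphere (0 : E n) 1,
      (∫ x', ‖r • x' - y'‖ ^ (-m) ∂(sphMeasure n)) ≤ C * (1 - r) ^ (-(m - n + 1)) := by
  have hn2 : (2:ℝ) ≤ (n:ℝ) := by exact_mod_cast hn
  obtain ⟨A, hAtop, hA⟩ := cap_bound n hn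
  -- degenerate cases
  rcases eq_or_ne (μH[(n:ℝ)-1] (sphere (0:E n) 1)) 0 with hV0 | hV0
  · refine ⟨1, one_pos, ?_⟩
    intro r hr y' hy'
    have hz : sphMeasure n = 0 := by
      rw [sphMeasure, Measure.restrict_eq_zero.mpr hV0, smul_zero]
    rw [hz, integral_zero_measure]
    have h1r : (0:ℝ) < 1 - r := by linarith [hr.2]
    positivity
  rcases eq_or_ne (μH[(n:ℝ)-1] (sphere (0:E n) 1)) ∞ with hVtop | hVtop
  · refine ⟨1, one_pos, ?_⟩
    intro r hr y' hy'
    have hz : sphMeasure n = 0 := by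
      rw [sphMeasure, hVtop, ENNReal.inv_top, zero_smul]
    rw [hz, integral_zero_measure]
    have h1r : (0:ℝ) < 1 - r := by linarith [hr.2]
    positivity
  -- main case
  set V := μH[(n:ℝ)-1] (sphere (0:E n) 1) with hVdef
  set q : ℝ := (2:ℝ) ^ ((n:ℝ)-1-m) with hqdef
  have hq0 : 0 < q := Real.rpow_pos_of_pos two_pos _
  have hq1 : q < 1 := Real.rpow_lt_one_of_one_lt_of_neg one_lt_two (by linarith)
  have hofq : ENNReal.ofReal q < 1 := by
    rw [show (1:ℝ≥0∞) = ENNReal.ofReal 1 by simp]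
    exact (ENNReal.ofReal_lt_ofReal_iff one_pos).mpr hq1
  set T : ℝ≥0∞ := V⁻¹ * A * ENNReal.ofReal ((4:ℝ)^m) * (1 - ENNReal.ofReal q)⁻¹ with hTdef
  have hTtop : T ≠ ∞ := by
    rw [hTdef]
    apply ENNReal.mul_ne_top
    apply ENNReal.mul_ne_top
    apply ENNReal.mul_ne_top
    · exact ENNReal.inv_ne_top.mpr hV0
    · exact hAtop
    · exact ENNReal.ofReal_ne_top
    · rw [ENNReal.inv_ne_top]
      intro h
      rw [tsub_eq_zero_iff_le] at h
      exact absurd h (not_le.mpr hofq)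
  refine ⟨T.toReal + 1, by positivity, ?_⟩
  intro r hr y' hy'
  have hy'n : ‖y'‖ = 1 := mem_sphere_zero_iff_norm.mp hy'
  obtain ⟨hr0, hr1⟩ := hr
  set δ : ℝ := 1 - r with hδdef
  have hδ0 : 0 < δ := by linarith
  have hδ1 : δ ≤ 1 := by linarith
  set f : E n → ℝ := fun x => ‖r • x - y'‖ ^ (-m) with hfdef
  have hfm : Measurable f := by
    have h1 : Continuous fun x : E n => ‖r • x - y'‖ :=
      ((continuous_const_smul r).sub continuous_const).norm
    exact meas_rpow_of_cont _ h1 (fun x => norm_nonneg _) (-m) (by intro h; simp at h; linarith)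
  have hf0 : ∀ x, 0 ≤ f x := fun x => Real.rpow_nonneg (norm_nonneg _) _
  -- dyadic annuli
  set Ak : ℕ → Set (E n) := fun k => Nat.rec (closedBall y' δ)
    (fun k _ => closedBall y' (2^(k+1) * δ) \ closedBall y' (2^k * δ)) k with hAkdef
  have hAk0 : Ak 0 = closedBall y' δ := rfl
  have hAks : ∀ k, Ak (k+1) = closedBall y' (2^(k+1) * δ) \ closedBall y' (2^k * δ) :=
    fun k => rfl
  have hAkm : ∀ k, MeasurableSet (Ak k) := by
    intro k
    cases k with
    | zero => exact measurableSet_closedBall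
    | succ k => exact measurableSet_closedBall.diff measurableSet_closedBall
  have hcover : ∀ x : E n, ∃ k, x ∈ Ak k := by
    intro x
    obtain ⟨k, hk⟩ := pow_unbounded_of_one_lt (dist x y' / δ) one_lt_two
    have hk' : dist x y' ≤ 2^k * δ := by
      rw [div_lt_iff₀ hδ0] at hk
      linarith
    clear hk
    induction k with
    | zero =>
      exact ⟨0, by simpa [hAk0, mem_closedBall] using by simpa using hk'⟩
    | succ k ih =>
      rcases le_or_gt (dist x y') (2^k * δ) with h | h
      · exact ih h
      · exact ⟨k+1, by rw [hAks k]; exact ⟨mem_closedBall.mpr hk', by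
          rw [mem_closedBall]; push_neg; exact h⟩⟩
  -- lower bound for ‖r • x - y'‖ on each annulus ∩ sphere
  have hlow : ∀ k : ℕ, ∀ x ∈ Ak k ∩ sphere (0:E n) 1, 2^k * δ / 4 ≤ ‖r • x - y'‖ := by
    rintro k x ⟨hxA, hxS⟩
    have hx1 : ‖x‖ = 1 := mem_sphere_zero_iff_norm.mp hxS
    have hlow1 : δ ≤ ‖r • x - y'‖ := by
      have h1 := norm_sub_norm_le y' (r • x)
      rw [norm_sub_rev] at h1
      rw [norm_smul, Real.norm_eq_abs, abs_of_nonneg hr0, hx1, hy'n] at h1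
      linarith
    have hlow2 : ‖x - y'‖ - δ ≤ ‖r • x - y'‖ := by
      have heq : r • x - y' = (x - y') - (1-r) • x := by
        rw [sub_smul, one_smul]; abel
      have h1 := norm_sub_norm_le (x - y') ((1-r) • x)
      rw [← heq, norm_smul, Real.norm_eq_abs, abs_of_nonneg hδ0.le, hx1] at h1
      linarith
    cases k with
    | zero => simp only [pow_zero, one_mul]; linarith
    | succ k =>
      rw [hAks k] at hxA
      have hxout : 2^k * δ < ‖x - y'‖ := by
        have := hxA.2
        rw [mem_closedBall, not_le, dist_eq_norm] at this
        exact this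
      have h2 : (2:ℝ)^(k+1) = 2 * 2^k := by ring
      rcases le_or_gt (‖x - y'‖) (2*δ) with h | h
      · nlinarith [pow_pos (two_pos (α := ℝ)) k]
      · nlinarith [pow_pos (two_pos (α := ℝ)) k]
  -- the measure restricted to the sphere
  have hσr : (sphMeasure n).restrict (sphere (0:E n) 1) = sphMeasure n := by
    rw [sphMeasure, Measure.restrict_smul,
      Measure.restrict_restrict (isClosed_sphere.measurableSet), inter_self]
  have hσapp : ∀ s : Set (E n), MeasurableSet s →
      sphMeasure n s = V⁻¹ * μH[(n:ℝ)-1] (s ∩ sphere (0:E n) 1) := by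
    intro s hs
    rw [sphMeasure, Measure.smul_apply, Measure.restrict_apply hs, smul_eq_mul]
  -- main estimate, in ℝ≥0∞
  have hmain : ∫⁻ x, ENNReal.ofReal (f x) ∂(sphMeasure n)
      ≤ T * ENNReal.ofReal (δ ^ ((n:ℝ)-1-m)) := by
    calc ∫⁻ x, ENNReal.ofReal (f x) ∂(sphMeasure n)
        = ∫⁻ x in sphere (0:E n) 1, ENNReal.ofReal (f x) ∂(sphMeasure n) := by
          rw [hσr]
      _ = ∫⁻ x in ⋃ k, (Ak k ∩ sphere (0:E n) 1), ENNReal.ofReal (f x) ∂(sphMeasure n) := by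
          congr 1
          rw [← iUnion_inter]
          rw [iUnion_eq_univ_iff.mpr hcover, univ_inter]
      _ ≤ ∑' k, ∫⁻ x in Ak k ∩ sphere (0:E n) 1, ENNReal.ofReal (f x) ∂(sphMeasure n) :=
          lintegral_iUnion_le _ _
      _ ≤ ∑' k, ENNReal.ofReal ((2^k * δ / 4) ^ (-m)) * (sphMeasure n) (Ak k ∩ sphere (0:E n) 1) := by
          apply ENNReal.tsum_le_tsum
          intro k
          calc ∫⁻ x in Ak k ∩ sphere (0:E n) 1, ENNReal.ofReal (f x) ∂(sphMeasure n)
              ≤ ∫⁻ _x in Ak k ∩ sphere (0:E n) 1,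
                  ENNReal.ofReal ((2^k * δ / 4) ^ (-m)) ∂(sphMeasure n) := by
                apply setLIntegral_mono' ((hAkm k).inter isClosed_sphere.measurableSet)
                intro x hx
                apply ENNReal.ofReal_le_ofReal
                exact Real.rpow_le_rpow_of_nonpos (by positivity) (hlow k x hx) (by linarith)
            _ = ENNReal.ofReal ((2^k * δ / 4) ^ (-m)) * (sphMeasure n) (Ak k ∩ sphere (0:E n) 1) :=
                setLIntegral_const _ _
      _ ≤ ∑' k, ENNReal.ofReal ((2^k * δ / 4) ^ (-m)) *
            (V⁻¹ * (A * ENNReal.ofReal ((2^k * δ) ^ ((n:ℝ)-1)))) := by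
          apply ENNReal.tsum_le_tsum
          intro k
          gcongr
          rw [hσapp _ ((hAkm k).inter isClosed_sphere.measurableSet)]
          gcongr
          have hsub : (Ak k ∩ sphere (0:E n) 1) ∩ sphere (0:E n) 1
              ⊆ sphere (0:E n) 1 ∩ closedBall y' (2^k * δ) := by
            rintro x ⟨⟨hxA, hxS⟩, -⟩
            refine ⟨hxS, ?_⟩
            cases k with
            | zero => simpa [hAk0, mem_closedBall] using hxA
            | succ k => rw [hAks k] at hxA; exact hxA.1
          refine (measure_mono hsub).trans ?_
          have h2kδ : (0:ℝ) < 2^k * δ := by positivity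
          refine (hA y' hy' (2^k * δ) h2kδ).trans ?_
          apply le_of_eq
          congr 1
          rw [← Real.rpow_natCast (2^k * δ) (n-1), Nat.cast_sub (by omega)]
          norm_num
      _ = ∑' k, (V⁻¹ * A * ENNReal.ofReal ((4:ℝ)^m) * ENNReal.ofReal (δ ^ ((n:ℝ)-1-m)))
            * (ENNReal.ofReal q)^k := by
          congr 1
          funext k
          have hx : (0:ℝ) < 2^k * δ := by positivity
          have hcalc : ((2:ℝ)^k * δ / 4)^(-m) * ((2:ℝ)^k * δ)^((n:ℝ)-1)
              = 4^m * δ^((n:ℝ)-1-m) * q^k := by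
            rw [Real.div_rpow hx.le (by norm_num), Real.rpow_neg (by norm_num : (0:ℝ) ≤ 4),
              div_eq_mul_inv, inv_inv]
            rw [show ((2:ℝ)^k * δ)^(-m) * 4^m * ((2:ℝ)^k * δ)^((n:ℝ)-1)
                = (((2:ℝ)^k * δ)^(-m) * ((2:ℝ)^k * δ)^((n:ℝ)-1)) * 4^m by ring]
            rw [← Real.rpow_add hx]
            rw [Real.mul_rpow (by positivity) hδ0.le]
            rw [← Real.rpow_natCast (2:ℝ) k, ← Real.rpow_mul (by norm_num : (0:ℝ) ≤ 2),
              mul_comm ((k:ℝ)) (-m + ((n:ℝ)-1)), Real.rpow_mul (by norm_num : (0:ℝ) ≤ 2),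
              Real.rpow_natCast]
            rw [hqdef]
            ring_nf
          calc ENNReal.ofReal ((2^k * δ / 4) ^ (-m)) *
                (V⁻¹ * (A * ENNReal.ofReal ((2^k * δ) ^ ((n:ℝ)-1))))
              = V⁻¹ * A * (ENNReal.ofReal ((2^k * δ / 4) ^ (-m))
                  * ENNReal.ofReal ((2^k * δ) ^ ((n:ℝ)-1))) := by ring
            _ = V⁻¹ * A * ENNReal.ofReal (4^m * δ^((n:ℝ)-1-m) * q^k) := by
                rw [← ENNReal.ofReal_mul (by positivity), hcalc]
            _ = V⁻¹ * A * (ENNReal.ofReal ((4:ℝ)^m) * ENNReal.ofReal (δ^((n:ℝ)-1-m))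
                  * (ENNReal.ofReal q)^k) := by
                rw [← ENNReal.ofReal_pow hq0.le, ← ENNReal.ofReal_mul (by positivity),
                  ← ENNReal.ofReal_mul (by positivity)]
            _ = _ := by ring
      _ = (V⁻¹ * A * ENNReal.ofReal ((4:ℝ)^m) * ENNReal.ofReal (δ ^ ((n:ℝ)-1-m)))
            * (1 - ENNReal.ofReal q)⁻¹ := by
          rw [ENNReal.tsum_mul_left, ENNReal.tsum_geometric]
      _ = T * ENNReal.ofReal (δ ^ ((n:ℝ)-1-m)) := by rw [hTdef]; ring
  -- convert to Bochner integral
  have hint : ∫ x, f x ∂(sphMeasure n)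
      = (∫⁻ x, ENNReal.ofReal (f x) ∂(sphMeasure n)).toReal := by
    exact integral_eq_lintegral_of_nonneg_ae (ae_of_all _ hf0) hfm.aestronglyMeasurable
  have hfin : T * ENNReal.ofReal (δ ^ ((n:ℝ)-1-m)) ≠ ∞ :=
    ENNReal.mul_ne_top hTtop ENNReal.ofReal_ne_top
  calc ∫ x, f x ∂(sphMeasure n)
      = (∫⁻ x, ENNReal.ofReal (f x) ∂(sphMeasure n)).toReal := hint
    _ ≤ (T * ENNReal.ofReal (δ ^ ((n:ℝ)-1-m))).toReal := ENNReal.toReal_mono hfin hmain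
    _ = T.toReal * δ ^ ((n:ℝ)-1-m) := by
        rw [ENNReal.toReal_mul, ENNReal.toReal_ofReal (by positivity)]
    _ ≤ (T.toReal + 1) * δ ^ ((n:ℝ)-1-m) := by
        have : (0:ℝ) < δ ^ ((n:ℝ)-1-m) := Real.rpow_pos_of_pos hδ0 _
        nlinarith [ENNReal.toReal_nonneg (a := T)]
    _ = (T.toReal + 1) * (1-r) ^ (-(m - n + 1)) := by
        rw [hδdef]
        congr 1
        ring_nf
end
end

section
/- Let α > 0 and 1 ≤ p < ∞. For f ∈ A^∞_α define t̃₂(f) = inf{ε > 0 : ∫₀¹ χ_{L̂_{ε,α}(f)}(r)(1-r)^{-1}dr < ∞} with L̂_{ε,α}(f) = {r ∈ [0,1) : M_∞(f,r)(1-r)^α ≥ ε}. Then t̃₂(f) ≤ dist_{A^∞_α}(f, B^{p,∞}_α). -/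
open MeasureTheory Metric Set
open Topology Filter
open scoped ENNReal NNReal

noncomputable section

lemma aux_meas_ind {s : Set ℝ} (hs : MeasurableSet s) {F : ℝ → ℝ}
    (hF : ContinuousOn F s) : Measurable (s.indicator F) := by
  have h1 : Measurable (F ∘ (Subtype.val : s → ℝ)) :=
    (continuousOn_iff_continuous_restrict.mp hF).measurable
  have h2 := (MeasurableEmbedding.subtype_coe hs).measurable_extend h1
    (measurable_const (a := (0:ℝ)))
  convert h2 using 1
  funext r
  by_cases hr : r ∈ s
  · rw [indicator_of_mem hr]
    have : r = (⟨r, hr⟩ : s).val := rfl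
    rw [this, Subtype.val_injective.extend_apply]
    rfl
  · rw [indicator_of_notMem hr, Function.extend_apply']
    rintro ⟨a, rfl⟩; exact hr a.2

lemma aux_sphere_ne {n : ℕ} (hn : 2 ≤ n) : Nonempty (sphere (0 : E n) 1) := by
  haveI : Nonempty (Fin n) := ⟨⟨0, by omega⟩⟩
  haveI : Nontrivial (E n) := by
    refine nontrivial_of_ne (EuclideanSpace.single ⟨0, by omega⟩ (1:ℝ)) 0 ?_
    intro h
    have := congrArg (fun v : E n => v ⟨0, by omega⟩) h
    simp at this
  exact (NormedSpace.sphere_nonempty.mpr zero_le_one).coe_sort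

lemma aux_mem_ball {n : ℕ} {r : ℝ} (hr : r ∈ Ico (0:ℝ) 1)
    (x' : sphere (0 : E n) 1) : r • (x' : E n) ∈ ball (0 : E n) 1 := by
  have hx : ‖(x' : E n)‖ = 1 := by
    simpa using mem_sphere_zero_iff_norm.mp x'.2
  rw [mem_ball_zero_iff, norm_smul, hx, mul_one, Real.norm_eq_abs, abs_of_nonneg hr.1]
  exact hr.2

lemma aux_cont {n : ℕ} {g : E n → ℝ} (hg : ContinuousOn g (ball 0 1))
    {r : ℝ} (hr : r ∈ Ico (0:ℝ) 1) :
    Continuous fun x' : sphere (0 : E n) 1 => |g (r • (x' : E n))| :=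
  (hg.comp_continuous (continuous_const.smul (f := fun _ : sphere (0 : E n) 1 => r)
      (g := fun x' : sphere (0 : E n) 1 => (x' : E n)) continuous_subtype_val)
    (aux_mem_ball hr)).abs

lemma aux_bdd {n : ℕ} {g : E n → ℝ} (hg : ContinuousOn g (ball 0 1))
    {r : ℝ} (hr : r ∈ Ico (0:ℝ) 1) :
    BddAbove (range fun x' : sphere (0 : E n) 1 => |g (r • (x' : E n))|) :=
  (isCompact_range (aux_cont hg hr)).bddAbove

lemma aux_max {n : ℕ} (hn : 2 ≤ n) {g : E n → ℝ} (hg : ContinuousOn g (ball 0 1))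
    {r : ℝ} (hr : r ∈ Ico (0:ℝ) 1) :
    ∃ x'₀ : sphere (0 : E n) 1, Minf n g r = |g (r • (x'₀ : E n))| := by
  haveI := aux_sphere_ne (n := n) hn
  obtain ⟨a, ⟨x'₀, rfl⟩, hub⟩ :=
    (isCompact_range (aux_cont hg hr)).exists_isGreatest (range_nonempty _)
  refine ⟨x'₀, le_antisymm (ciSup_le fun y => hub ⟨y, rfl⟩) (le_ciSup (aux_bdd hg hr) x'₀)⟩

lemma Minf_nonneg {n : ℕ} (g : E n → ℝ) (r : ℝ) : 0 ≤ Minf n g r :=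
  Real.iSup_nonneg fun _ => abs_nonneg _

lemma aux_key {n : ℕ} (hn : 2 ≤ n) {α p : ℝ} (hα : 0 < α) (hp : 1 ≤ p)
    {f g : E n → ℝ} (hfc : ContinuousOn f (ball 0 1)) (hgc : ContinuousOn g (ball 0 1))
    (hgint : (∫⁻ r in Ioo (0:ℝ) 1,
      ENNReal.ofReal (Minf n g r ^ p * (1 - r) ^ (α * p - 1))) < ⊤)
    {d η : ℝ} (hd : 0 ≤ d) (hη : 0 < η)
    (hgd : ∀ x ∈ ball (0 : E n) 1, |f x - g x| * (1 - ‖x‖) ^ α ≤ d) :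
    (∫⁻ r in {r : ℝ | r ∈ Ico (0:ℝ) 1 ∧ d + η ≤ Minf n f r * (1 - r) ^ α},
      ENNReal.ofReal ((1 - r)⁻¹)) < ⊤ := by
  haveI := aux_sphere_ne (n := n) hn
  obtain ⟨e, he⟩ := TopologicalSpace.exists_dense_seq (sphere (0 : E n) 1)
  set ψ : ℝ → ℝ≥0∞ := fun r => ⨆ k, ENNReal.ofReal
    ((Ioo (-1:ℝ) 1).indicator (fun t => |g (t • (e k : E n))|) r) with hψdef
  have hψmeas : Measurable ψ := by
    refine Measurable.iSup fun k => ENNReal.measurable_ofReal.comp ?_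
    refine aux_meas_ind measurableSet_Ioo ?_
    refine ContinuousOn.abs (hgc.comp ((continuous_id.smul continuous_const).continuousOn) ?_)
    intro t ht
    have hx : ‖((e k : sphere (0:E n) 1) : E n)‖ = 1 := by
      simpa using mem_sphere_zero_iff_norm.mp (e k).2
    rw [mem_ball_zero_iff, norm_smul, hx, mul_one, Real.norm_eq_abs]
    exact abs_lt.mpr ⟨ht.1, ht.2⟩
  have hψ_eq : ∀ r ∈ Ico (0:ℝ) 1, ψ r = ENNReal.ofReal (Minf n g r) := by
    intro r hr
    have hrI : r ∈ Ioo (-1:ℝ) 1 := ⟨by linarith [hr.1], hr.2⟩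
    have hind : ∀ k, (Ioo (-1:ℝ) 1).indicator (fun t => |g (t • (e k : E n))|) r
        = |g (r • (e k : E n))| := fun k => indicator_of_mem hrI _
    apply le_antisymm
    · refine iSup_le fun k => ?_
      rw [hind k]
      exact ENNReal.ofReal_le_ofReal (le_ciSup (aux_bdd hgc hr) (e k))
    · obtain ⟨x'₀, hx'₀⟩ := aux_max hn hgc hr
      rw [hx'₀]
      have hxcl : x'₀ ∈ closure (range e) := by
        rw [he.closure_eq]; trivial
      obtain ⟨u, hu_mem, hu_lim⟩ := mem_closure_iff_seq_limit.mp hxcl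
      have hcont : Continuous fun x' : sphere (0:E n) 1 =>
          ENNReal.ofReal |g (r • (x' : E n))| :=
        ENNReal.continuous_ofReal.comp (aux_cont hgc hr)
      have hlim : Filter.Tendsto (fun j => ENNReal.ofReal |g (r • (u j : E n))|)
          Filter.atTop (𝓝 (ENNReal.ofReal |g (r • (x'₀ : E n))|)) :=
        (hcont.tendsto x'₀).comp hu_lim
      refine le_of_tendsto hlim (Filter.Eventually.of_forall fun j => ?_)
      obtain ⟨k, hk⟩ := hu_mem j
      rw [← hk]
      have := le_iSup (fun k => ENNReal.ofReal
        ((Ioo (-1:ℝ) 1).indicator (fun t => |g (t • (e k : E n))|) r)) k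
      rwa [hind k] at this
  set L' : Set ℝ := {r : ℝ | r ∈ Ico (0:ℝ) 1 ∧
    ENNReal.ofReal (η * (1 - r) ^ (-α)) ≤ ψ r} with hL'def
  have hL'meas : MeasurableSet L' := by
    have h1 : Measurable fun r : ℝ => ENNReal.ofReal (η * (1 - r) ^ (-α)) :=
      ENNReal.measurable_ofReal.comp
        (measurable_const.mul ((measurable_const.sub measurable_id).pow measurable_const))
    exact (measurableSet_Ico.inter (measurableSet_le (α := ℝ≥0∞) h1 hψmeas))
  have hsub : {r : ℝ | r ∈ Ico (0:ℝ) 1 ∧ d + η ≤ Minf n f r * (1 - r) ^ α} ⊆ L' := by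
    rintro r ⟨hr, hεle⟩
    have h1r : (0:ℝ) < 1 - r := by simp only [mem_Ico] at hr; linarith [hr.2]
    have hA : (0:ℝ) < (1 - r) ^ α := Real.rpow_pos_of_pos h1r α
    have hAinv : (1 - r:ℝ) ^ (-α) = ((1 - r) ^ α)⁻¹ := Real.rpow_neg h1r.le α
    have hMf : Minf n f r ≤ Minf n g r + d * (1 - r) ^ (-α) := by
      refine ciSup_le fun x' => ?_
      have hx := hgd (r • (x' : E n)) (aux_mem_ball hr x')
      have hnorm : ‖r • (x' : E n)‖ = r := by
        have hx1 : ‖(x' : E n)‖ = 1 := by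
          simpa using mem_sphere_zero_iff_norm.mp x'.2
        rw [norm_smul, hx1, mul_one, Real.norm_eq_abs, abs_of_nonneg hr.1]
      rw [hnorm] at hx
      have h2 : |f (r • (x' : E n)) - g (r • (x' : E n))| ≤ d * (1 - r) ^ (-α) := by
        rw [hAinv, mul_comm, ← div_eq_inv_mul, le_div_iff₀ hA]
        exact hx
      have h3 : |f (r • (x' : E n))| ≤ |g (r • (x' : E n))|
          + |f (r • (x' : E n)) - g (r • (x' : E n))| := by
        have := abs_sub_abs_le_abs_sub (f (r • (x' : E n))) (g (r • (x' : E n)))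
        linarith
      exact h3.trans (add_le_add (le_ciSup (aux_bdd hgc hr) x') h2)
    have h3 : (d + η) * (1 - r) ^ (-α) ≤ Minf n f r := by
      have h4 := mul_le_mul_of_nonneg_right hεle (inv_nonneg.mpr hA.le)
      rw [mul_assoc, mul_inv_cancel₀ hA.ne', mul_one] at h4
      rw [hAinv]; exact h4
    have hMg : η * (1 - r) ^ (-α) ≤ Minf n g r := by nlinarith [hMf, h3]
    exact ⟨hr, by rw [hψ_eq r hr]; exact ENNReal.ofReal_le_ofReal hMg⟩
  have hpt : ∀ r ∈ L', ENNReal.ofReal ((1 - r)⁻¹) ≤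
      ENNReal.ofReal (η ^ (-p)) * (ψ r ^ p * ENNReal.ofReal ((1 - r) ^ (α * p - 1))) := by
    rintro r ⟨hr, hle⟩
    have h1r : (0:ℝ) < 1 - r := by simp only [mem_Ico] at hr; linarith [hr.2]
    have hbase : (0:ℝ) ≤ η * (1 - r) ^ (-α) :=
      mul_nonneg hη.le (Real.rpow_nonneg h1r.le _)
    have h5 : ENNReal.ofReal ((η * (1 - r) ^ (-α)) ^ p) ≤ ψ r ^ p := by
      rw [← ENNReal.ofReal_rpow_of_nonneg hbase (by linarith)]
      exact ENNReal.rpow_le_rpow hle (by linarith)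
    have e1 : ((1 - r : ℝ) ^ (-α)) ^ p = (1 - r) ^ (-(α * p)) := by
      rw [← Real.rpow_mul h1r.le]; ring_nf
    have e2 : (η:ℝ) ^ (-p) * η ^ p = 1 := by
      rw [← Real.rpow_add hη]; simp
    have e3 : ((1 - r : ℝ)) ^ (-(α * p)) * (1 - r) ^ (α * p - 1) = (1 - r)⁻¹ := by
      rw [← Real.rpow_add h1r]
      have : -(α * p) + (α * p - 1) = -1 := by ring
      rw [this, Real.rpow_neg_one]
    have key : (1 - r)⁻¹ = η ^ (-p) * ((η * (1 - r) ^ (-α)) ^ p * (1 - r) ^ (α * p - 1)) := by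
      have expand : η ^ (-p) * ((η * (1 - r) ^ (-α)) ^ p * (1 - r) ^ (α * p - 1))
          = (η ^ (-p) * η ^ p) * ((1 - r) ^ (-(α * p)) * (1 - r) ^ (α * p - 1)) := by
        rw [Real.mul_rpow hη.le (Real.rpow_nonneg h1r.le _), e1]; ring
      rw [expand, e2, e3, one_mul]
    calc ENNReal.ofReal ((1 - r)⁻¹)
        = ENNReal.ofReal (η ^ (-p)) * (ENNReal.ofReal ((η * (1 - r) ^ (-α)) ^ p)
            * ENNReal.ofReal ((1 - r) ^ (α * p - 1))) := by
          rw [← ENNReal.ofReal_mul (Real.rpow_nonneg hbase _),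
            ← ENNReal.ofReal_mul (Real.rpow_nonneg hη.le _), ← key]
      _ ≤ ENNReal.ofReal (η ^ (-p)) * (ψ r ^ p * ENNReal.ofReal ((1 - r) ^ (α * p - 1))) :=
          mul_le_mul_right (mul_le_mul_left h5 _) _
  calc (∫⁻ r in {r : ℝ | r ∈ Ico (0:ℝ) 1 ∧ d + η ≤ Minf n f r * (1 - r) ^ α},
        ENNReal.ofReal ((1 - r)⁻¹))
      ≤ ∫⁻ r in L', ENNReal.ofReal ((1 - r)⁻¹) := lintegral_mono_set hsub
    _ ≤ ∫⁻ r in L', ENNReal.ofReal (η ^ (-p))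
          * (ψ r ^ p * ENNReal.ofReal ((1 - r) ^ (α * p - 1))) :=
        setLIntegral_mono' hL'meas hpt
    _ ≤ ∫⁻ r in Ico (0:ℝ) 1, ENNReal.ofReal (η ^ (-p))
          * (ψ r ^ p * ENNReal.ofReal ((1 - r) ^ (α * p - 1))) :=
        lintegral_mono_set fun r hr => hr.1
    _ = ENNReal.ofReal (η ^ (-p)) * ∫⁻ r in Ico (0:ℝ) 1,
          (ψ r ^ p * ENNReal.ofReal ((1 - r) ^ (α * p - 1))) :=
        lintegral_const_mul' _ _ ENNReal.ofReal_ne_top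
    _ < ⊤ := by
        rw [← Measure.restrict_congr_set Ioo_ae_eq_Ico]
        have heq : (∫⁻ r in Ioo (0:ℝ) 1, (ψ r ^ p * ENNReal.ofReal ((1 - r) ^ (α * p - 1))))
            = ∫⁻ r in Ioo (0:ℝ) 1, ENNReal.ofReal (Minf n g r ^ p * (1 - r) ^ (α * p - 1)) := by
          refine setLIntegral_congr_fun measurableSet_Ioo (
            fun r hr => ?_)
          have hr' : r ∈ Ico (0:ℝ) 1 := ⟨hr.1.le, hr.2⟩
          rw [hψ_eq r hr', ENNReal.ofReal_rpow_of_nonneg (Minf_nonneg g r) (by linarith),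
            ← ENNReal.ofReal_mul (Real.rpow_nonneg (Minf_nonneg g r) _)]
        rw [heq]
        exact ENNReal.mul_lt_top ENNReal.ofReal_lt_top hgint

/-- half of Theorem 5: for `f ∈ A^∞_α`, `1 ≤ p < ∞`,
`t̃₂(f) ≤ dist_{A^∞_α}(f, B^{p,∞}_α)`. -/
theorem stmt11 (n : ℕ) (hn : 2 ≤ n) (α p : ℝ) (hα : 0 < α) (hp : 1 ≤ p)
    (f : E n → ℝ) (hf : HarmonicOnBall f)
    (hfA : ∃ C : ℝ, ∀ x ∈ ball (0 : E n) 1, |f x| * (1 - ‖x‖) ^ α ≤ C) :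
    sInf {ε : ℝ | 0 < ε ∧
        (∫⁻ r in {r : ℝ | r ∈ Ico (0:ℝ) 1 ∧ ε ≤ Minf n f r * (1 - r) ^ α},
          ENNReal.ofReal ((1 - r)⁻¹)) < ⊤} ≤
      sInf {d : ℝ | 0 ≤ d ∧ ∃ g : E n → ℝ, HarmonicOnBall g ∧
        (∫⁻ r in Ioo (0:ℝ) 1,
          ENNReal.ofReal (Minf n g r ^ p * (1 - r) ^ (α * p - 1))) < ⊤ ∧
        ∀ x ∈ ball (0 : E n) 1, |f x - g x| * (1 - ‖x‖) ^ α ≤ d} := by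
  obtain ⟨C, hC⟩ := hfA
  haveI := aux_sphere_ne (n := n) hn
  have hzero : HarmonicOnBall (fun _ : E n => (0:ℝ)) :=
    ⟨contDiffOn_const, fun x _ => by simp [lap, iteratedFDeriv_zero_fun]⟩
  have hMzero : ∀ r : ℝ, Minf n (fun _ : E n => (0:ℝ)) r = 0 := fun r => by
    simp [Minf]
  have hBmem : (max C 0) ∈ {d : ℝ | 0 ≤ d ∧ ∃ g : E n → ℝ, HarmonicOnBall g ∧
      (∫⁻ r in Ioo (0:ℝ) 1,
        ENNReal.ofReal (Minf n g r ^ p * (1 - r) ^ (α * p - 1))) < ⊤ ∧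
      ∀ x ∈ ball (0 : E n) 1, |f x - g x| * (1 - ‖x‖) ^ α ≤ d} := by
    refine ⟨le_max_right C 0, fun _ => 0, hzero, ?_, fun x hx => ?_⟩
    · have h0 : ∀ r : ℝ, ENNReal.ofReal
          (Minf n (fun _ : E n => (0:ℝ)) r ^ p * (1 - r) ^ (α * p - 1)) = 0 := fun r => by
        rw [hMzero, Real.zero_rpow (by linarith : p ≠ 0), zero_mul, ENNReal.ofReal_zero]
      rw [lintegral_congr h0, lintegral_zero]
      exact ENNReal.zero_lt_top
    · simpa using (hC x hx).trans (le_max_left C 0)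
  refine le_csInf ⟨max C 0, hBmem⟩ fun d hd => ?_
  obtain ⟨hd0, g, hg, hgint, hgd⟩ := hd
  refine le_of_forall_pos_le_add fun η hη => ?_
  refine csInf_le ⟨0, fun x hx => hx.1.le⟩ ?_
  exact ⟨by linarith, aux_key hn hα hp hf.1.continuousOn hg.1.continuousOn hgint hd0 hη hgd⟩
end
end

section
/- Let α > 0 and let L̂ ⊂ [0,1) be a measurable set with ∫_{L̂} (1-ρ)^{-1} dρ < ∞. Define ψ(r) = (1-r)^α ∫_{L̂} (1-rρ)^{-(1+α)} dρ. Then ψ ∈ L^1([0,1), (1-r)^{-1}dr) and ψ ∈ L^∞([0,1)), hence ψ ∈ L^p([0,1), (1-r)^{-1}dr) for all 1 ≤ p < ∞. -/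
open MeasureTheory Metric Set
open scoped ENNReal NNReal

noncomputable section

private lemma aux_ftc_stmt12 (α v : ℝ) (hα : 0 < α) (hv : 0 < v) :
    ∫⁻ r in Ioo (0:ℝ) 1, ENNReal.ofReal ((1-r) ^ (α-1) * ((1-r)+v) ^ (-(1+α))) ≤
      ENNReal.ofReal ((α*v)⁻¹) := by
  set h : ℝ → ℝ := fun r => (1-r) ^ (α-1) * ((1-r)+v) ^ (-(1+α)) with hh
  set G : ℝ → ℝ := fun r => -(α*v)⁻¹ * ((1-r) ^ α * ((1-r)+v) ^ (-α)) with hG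
  have hw : ∀ r : ℝ, r ≤ 1 → (0:ℝ) < (1-r)+v := fun r hr => by nlinarith
  have hnn : ∀ r ∈ Ioo (0:ℝ) 1, 0 ≤ h r := by
    intro r hr
    exact mul_nonneg (Real.rpow_nonneg (by linarith [hr.2]) _)
      (Real.rpow_nonneg (le_of_lt (hw r hr.2.le)) _)
  have hmeas : Measurable h := by fun_prop
  -- integrability
  have hint : IntegrableOn h (Ioo (0:ℝ) 1) := by
    have h1 : IntervalIntegrable (fun x : ℝ => x ^ (α-1)) volume 0 1 :=
      intervalIntegral.intervalIntegrable_rpow' (by linarith)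
    have h2 := (h1.comp_sub_left 1).symm
    simp only [sub_zero, sub_self] at h2
    have h3 : IntegrableOn (fun x : ℝ => (1-x) ^ (α-1)) (Ioo (0:ℝ) 1) :=
      (h2.1).mono_set Ioo_subset_Ioc_self
    refine (h3.mul_const (v ^ (-(1+α)))).mono' hmeas.aestronglyMeasurable ?_
    filter_upwards [ae_restrict_mem measurableSet_Ioo] with r hr
    have h1r : (0:ℝ) < 1 - r := by linarith [hr.2]
    rw [Real.norm_of_nonneg (hnn r hr)]
    apply mul_le_mul_of_nonneg_left _ (Real.rpow_nonneg h1r.le _)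
    exact Real.rpow_le_rpow_of_nonpos hv (by linarith) (by linarith)
  have hintI : IntervalIntegrable h volume 0 1 := by
    rw [intervalIntegrable_iff_integrableOn_Ioo_of_le (by norm_num)]
    exact hint
  -- derivative
  have hderiv : ∀ r ∈ Ioo (0:ℝ) 1, HasDerivAt G (h r) r := by
    intro r hr
    have h1r : (0:ℝ) < 1 - r := by linarith [hr.2]
    have hwr : (0:ℝ) < (1-r)+v := hw r hr.2.le
    have d1 : HasDerivAt (fun r : ℝ => 1 - r) (-1) r := by
      exact (hasDerivAt_id' r).const_sub (1:ℝ)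
    have dA : HasDerivAt (fun r : ℝ => (1-r) ^ α) (-1 * α * (1-r) ^ (α-1)) r :=
      d1.rpow_const (Or.inl h1r.ne')
    have d2 : HasDerivAt (fun r : ℝ => (1-r)+v) (-1) r := d1.add_const v
    have dB : HasDerivAt (fun r : ℝ => ((1-r)+v) ^ (-α)) (-1 * (-α) * ((1-r)+v) ^ (-α-1)) r :=
      d2.rpow_const (Or.inl hwr.ne')
    have dP := (dA.mul dB).const_mul (-(α*v)⁻¹)
    refine dP.congr_deriv ?_
    symm
    have e1 : (1-r) ^ α = (1-r) ^ (α-1) * (1-r) := by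
      rw [← Real.rpow_add_one h1r.ne' (α-1)]; ring_nf
    have e2 : ((1-r)+v) ^ (-α) = ((1-r)+v) ^ (-α-1) * ((1-r)+v) := by
      rw [← Real.rpow_add_one hwr.ne' (-α-1)]; ring_nf
    have e3 : ((1-r)+v) ^ (-(1+α)) = ((1-r)+v) ^ (-α-1) := by ring_nf
    rw [hh]
    simp only []
    rw [e3, e1, e2]
    field_simp
    ring
  -- continuity of G
  have hcont : ContinuousOn G (Icc (0:ℝ) 1) := by
    apply ContinuousOn.mul continuousOn_const
    apply ContinuousOn.mul
    · intro r hr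
      apply ContinuousAt.continuousWithinAt
      exact (Real.continuousAt_rpow_const _ _ (Or.inr hα.le)).comp
        ((continuous_const.sub continuous_id).continuousAt)
    · intro r hr
      apply ContinuousAt.continuousWithinAt
      apply ContinuousAt.rpow_const
      · exact ((continuous_const.sub continuous_id).add continuous_const).continuousAt
      · exact Or.inl (hw r hr.2).ne'
  -- FTC
  have hFTC : ∫ r in (0:ℝ)..1, h r = G 1 - G 0 :=
    intervalIntegral.integral_eq_sub_of_hasDerivAt_of_le (by norm_num) hcont hderiv hintI
  have hval : ∫ r in Ioo (0:ℝ) 1, h r ≤ (α*v)⁻¹ := by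
    have : ∫ r in (0:ℝ)..1, h r = ∫ r in Ioo (0:ℝ) 1, h r := by
      rw [intervalIntegral.integral_of_le (by norm_num), integral_Ioc_eq_integral_Ioo]
    rw [← this, hFTC, hG]
    have hpos : (0:ℝ) < α * v := mul_pos hα hv
    have g0 : ((1:ℝ)+v) ^ (-α) ≤ 1 := by
      calc (1+v) ^ (-α) ≤ (1:ℝ) ^ (-α) :=
            Real.rpow_le_rpow_of_nonpos one_pos (by linarith) (by linarith)
        _ = 1 := Real.one_rpow _
    have hi : (0:ℝ) ≤ (α*v)⁻¹ := inv_nonneg.2 hpos.le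
    simp only [sub_self, Real.zero_rpow hα.ne', zero_mul, mul_zero, neg_zero, zero_sub,
      sub_zero, Real.one_rpow, one_mul, neg_mul, neg_neg, zero_add]
    nlinarith [Real.rpow_nonneg (by linarith : (0:ℝ) ≤ 1+v) (-α)]
  -- conclude
  have heq : ENNReal.ofReal (∫ r in Ioo (0:ℝ) 1, h r) =
      ∫⁻ r in Ioo (0:ℝ) 1, ENNReal.ofReal (h r) := by
    apply ofReal_integral_eq_lintegral_ofReal hint
    filter_upwards [ae_restrict_mem measurableSet_Ioo] with r hr using hnn r hr
  calc ∫⁻ r in Ioo (0:ℝ) 1, ENNReal.ofReal (h r) = ENNReal.ofReal (∫ r in Ioo (0:ℝ) 1, h r) := heq.symm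
    _ ≤ ENNReal.ofReal ((α*v)⁻¹) := ENNReal.ofReal_le_ofReal hval

private lemma aux_key_stmt12 (α ρ : ℝ) (hα : 0 < α) (hρ0 : 0 ≤ ρ) (hρ1 : ρ < 1) :
    ∫⁻ r in Ioo (0:ℝ) 1, ENNReal.ofReal ((1-r) ^ (α-1) * (1 - r*ρ) ^ (-(1+α))) ≤
      ENNReal.ofReal ((2:ℝ) ^ (1+α) * α⁻¹) * ENNReal.ofReal ((1-ρ)⁻¹) := by
  set v : ℝ := 1 - ρ with hv
  have hv0 : 0 < v := by simp [hv]; linarith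
  have step : ∀ r ∈ Ioo (0:ℝ) 1,
      ENNReal.ofReal ((1-r) ^ (α-1) * (1 - r*ρ) ^ (-(1+α))) ≤
      ENNReal.ofReal ((2:ℝ) ^ (1+α)) * ENNReal.ofReal ((1-r) ^ (α-1) * ((1-r)+v) ^ (-(1+α))) := by
    intro r hr
    have h1r : (0:ℝ) < 1 - r := by linarith [hr.2]
    have hx : (0:ℝ) < (1-r)+v := by positivity
    have hxx : ((1-r)+v)/2 ≤ 1 - r*ρ := by nlinarith [hr.1.le, hr.2.le]
    have hhalf : (0:ℝ) < ((1-r)+v)/2 := by positivity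
    have hb : (1 - r*ρ) ^ (-(1+α)) ≤ (((1-r)+v)/2) ^ (-(1+α)) :=
      Real.rpow_le_rpow_of_nonpos hhalf hxx (by linarith)
    have hdiv : (((1-r)+v)/2) ^ (-(1+α)) = (2:ℝ) ^ (1+α) * ((1-r)+v) ^ (-(1+α)) := by
      rw [Real.div_rpow hx.le (by norm_num), Real.rpow_neg (by norm_num : (0:ℝ) ≤ 2)]
      field_simp
    rw [← ENNReal.ofReal_mul (by positivity)]
    apply ENNReal.ofReal_le_ofReal
    calc (1-r) ^ (α-1) * (1 - r*ρ) ^ (-(1+α))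
        ≤ (1-r) ^ (α-1) * ((((1-r)+v)/2) ^ (-(1+α))) :=
          mul_le_mul_of_nonneg_left hb (Real.rpow_nonneg h1r.le _)
      _ = (2:ℝ) ^ (1+α) * ((1-r) ^ (α-1) * ((1-r)+v) ^ (-(1+α))) := by rw [hdiv]; ring
  calc ∫⁻ r in Ioo (0:ℝ) 1, ENNReal.ofReal ((1-r) ^ (α-1) * (1 - r*ρ) ^ (-(1+α)))
      ≤ ∫⁻ r in Ioo (0:ℝ) 1, ENNReal.ofReal ((2:ℝ) ^ (1+α)) *
          ENNReal.ofReal ((1-r) ^ (α-1) * ((1-r)+v) ^ (-(1+α))) := by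
        apply setLIntegral_mono (by fun_prop) step
    _ = ENNReal.ofReal ((2:ℝ) ^ (1+α)) *
          ∫⁻ r in Ioo (0:ℝ) 1, ENNReal.ofReal ((1-r) ^ (α-1) * ((1-r)+v) ^ (-(1+α))) :=
        lintegral_const_mul' _ _ ENNReal.ofReal_ne_top
    _ ≤ ENNReal.ofReal ((2:ℝ) ^ (1+α)) * ENNReal.ofReal ((α*v)⁻¹) :=
        mul_le_mul_right (aux_ftc_stmt12 α v hα hv0) _
    _ = ENNReal.ofReal ((2:ℝ) ^ (1+α) * α⁻¹) * ENNReal.ofReal ((1-ρ)⁻¹) := by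
        rw [← ENNReal.ofReal_mul (by positivity), ← ENNReal.ofReal_mul (by positivity)]
        rw [mul_inv, hv]; ring_nf

/-- for `α > 0` and measurable `L̂ ⊆ [0,1)` with `∫_{L̂}(1-ρ)^{-1}dρ < ∞`,
`ψ(r) = (1-r)^α ∫_{L̂}(1-rρ)^{-(1+α)}dρ` lies in `L¹((1-r)^{-1}dr)`, in `L^∞`, and
in `L^p((1-r)^{-1}dr)` for every `1 ≤ p < ∞`. -/
theorem stmt12 (α : ℝ) (hα : 0 < α) (L : Set ℝ) (hL : MeasurableSet L)
    (hL' : L ⊆ Ico (0:ℝ) 1)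
    (hfin : (∫⁻ ρ in L, ENNReal.ofReal ((1 - ρ)⁻¹)) < ⊤) :
    ((∫⁻ r in Ioo (0:ℝ) 1,
        ENNReal.ofReal ((1 - r) ^ α * ∫ ρ in L, (1 - r * ρ) ^ (-(1 + α))) *
          ENNReal.ofReal ((1 - r)⁻¹)) < ⊤) ∧
    (∃ C : ℝ, ∀ r ∈ Ico (0:ℝ) 1,
        (1 - r) ^ α * (∫ ρ in L, (1 - r * ρ) ^ (-(1 + α))) ≤ C) ∧
    (∀ p : ℝ, 1 ≤ p →
      (∫⁻ r in Ioo (0:ℝ) 1,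
        ENNReal.ofReal (((1 - r) ^ α * ∫ ρ in L, (1 - r * ρ) ^ (-(1 + α))) ^ p) *
          ENNReal.ofReal ((1 - r)⁻¹)) < ⊤) := by
  set g : ℝ → ℝ → ℝ := fun r ρ => (1 - r * ρ) ^ (-(1 + α)) with hg
  set ψ : ℝ → ℝ := fun r => (1 - r) ^ α * ∫ ρ in L, g r ρ with hψ
  -- basic facts
  have hcpos : ∀ r ∈ Ico (0:ℝ) 1, ∀ ρ ∈ L, (0:ℝ) < 1 - r * ρ := by
    intro r hr ρ hρ
    obtain ⟨hρ0, hρ1⟩ := hL' hρ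
    nlinarith [hr.1, hr.2]
  have hμL : volume L < ⊤ := by
    have : volume L = ∫⁻ _ in L, 1 := (setLIntegral_one L).symm
    rw [this]
    refine lt_of_le_of_lt (setLIntegral_mono (by fun_prop) ?_) hfin
    intro ρ hρ
    obtain ⟨hρ0, hρ1⟩ := hL' hρ
    have : (1:ℝ) ≤ (1-ρ)⁻¹ := one_le_inv_iff₀.2 ⟨by linarith, by linarith⟩
    calc (1:ℝ≥0∞) = ENNReal.ofReal 1 := by simp
      _ ≤ ENNReal.ofReal ((1-ρ)⁻¹) := ENNReal.ofReal_le_ofReal this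
  have hCint : IntegrableOn (fun ρ : ℝ => (1-ρ)⁻¹) L := by
    refine ⟨((measurable_const.sub measurable_id).inv).aestronglyMeasurable, ?_⟩
    rw [hasFiniteIntegral_iff_ofReal ?_]
    · exact hfin
    · filter_upwards [ae_restrict_of_forall_mem hL (fun ρ hρ => (hL' hρ))] with ρ hρ
      exact inv_nonneg.2 (by linarith [hρ.2])
  -- L∞ bound
  set C : ℝ := ∫ ρ in L, (1-ρ)⁻¹ with hC
  have hC0 : 0 ≤ C := setIntegral_nonneg hL (fun ρ hρ =>
    inv_nonneg.2 (by linarith [(hL' hρ).2]))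
  have hpt : ∀ r ∈ Ico (0:ℝ) 1, ∀ ρ ∈ L, (1-r) ^ α * g r ρ ≤ (1-ρ)⁻¹ := by
    intro r hr ρ hρ
    obtain ⟨hρ0, hρ1⟩ := hL' hρ
    have ha : (0:ℝ) < 1 - r := by linarith [hr.2]
    have hb : (0:ℝ) < 1 - ρ := by linarith
    have hc : (0:ℝ) < 1 - r * ρ := hcpos r hr ρ hρ
    have hac : 1 - r ≤ 1 - r * ρ := by nlinarith [hr.1]
    have hbc : 1 - ρ ≤ 1 - r * ρ := by nlinarith [hr.1]
    calc (1-r) ^ α * g r ρ ≤ (1 - r*ρ) ^ α * (1 - r*ρ) ^ (-(1+α)) :=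
          mul_le_mul_of_nonneg_right (Real.rpow_le_rpow ha.le hac hα.le)
            (Real.rpow_nonneg hc.le _)
      _ = (1 - r*ρ) ^ (α + -(1+α)) := (Real.rpow_add hc _ _).symm
      _ = (1 - r*ρ) ^ (-1 : ℝ) := by ring_nf
      _ = (1 - r*ρ)⁻¹ := Real.rpow_neg_one _
      _ ≤ (1-ρ)⁻¹ := by
          exact inv_anti₀ hb hbc
  have hψle : ∀ r ∈ Ico (0:ℝ) 1, ψ r ≤ C := by
    intro r hr
    have : ψ r = ∫ ρ in L, (1-r) ^ α * g r ρ := (integral_const_mul _ _).symm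
    rw [this, hC]
    refine integral_mono_of_nonneg ?_ hCint ?_
    · filter_upwards [ae_restrict_of_forall_mem hL (fun ρ hρ => hρ)] with ρ hρ
      have ha : (0:ℝ) ≤ 1 - r := by linarith [hr.2]
      exact mul_nonneg (Real.rpow_nonneg ha _)
        (Real.rpow_nonneg (hcpos r hr ρ hρ).le _)
    · filter_upwards [ae_restrict_of_forall_mem hL (fun ρ hρ => hρ)] with ρ hρ
      exact hpt r hr ρ hρ
  have hψ0 : ∀ r ∈ Ico (0:ℝ) 1, 0 ≤ ψ r := by
    intro r hr
    have ha : (0:ℝ) ≤ 1 - r := by linarith [hr.2]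
    refine mul_nonneg (Real.rpow_nonneg ha _) (setIntegral_nonneg hL ?_)
    exact fun ρ hρ => Real.rpow_nonneg (hcpos r hr ρ hρ).le _
  -- Part 1
  have part1 : (∫⁻ r in Ioo (0:ℝ) 1,
      ENNReal.ofReal (ψ r) * ENNReal.ofReal ((1 - r)⁻¹)) < ⊤ := by
    have key : ∀ r ∈ Ioo (0:ℝ) 1,
        ENNReal.ofReal (ψ r) * ENNReal.ofReal ((1 - r)⁻¹) =
        ∫⁻ ρ in L, ENNReal.ofReal ((1-r) ^ (α-1) * g r ρ) := by
      intro r hr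
      have hr' : r ∈ Ico (0:ℝ) 1 := ⟨hr.1.le, hr.2⟩
      have ha : (0:ℝ) < 1 - r := by linarith [hr.2]
      have hgm : AEStronglyMeasurable (g r) (volume.restrict L) := by fun_prop
      have hgnn : 0 ≤ᵐ[volume.restrict L] g r := by
        filter_upwards [ae_restrict_of_forall_mem hL (fun ρ hρ => hρ)] with ρ hρ
        exact Real.rpow_nonneg (hcpos r hr' ρ hρ).le _
      have heq1 : ∫ ρ in L, g r ρ = (∫⁻ ρ in L, ENNReal.ofReal (g r ρ)).toReal :=
        integral_eq_lintegral_of_nonneg_ae hgnn hgm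
      have hfin' : (∫⁻ ρ in L, ENNReal.ofReal (g r ρ)) < ⊤ := by
        refine lt_of_le_of_lt (setLIntegral_mono (g := fun _ =>
          ENNReal.ofReal ((1-r) ^ (-(1+α)))) measurable_const ?_) ?_
        · intro ρ hρ
          apply ENNReal.ofReal_le_ofReal
          have hac : 1 - r ≤ 1 - r * ρ := by
            obtain ⟨hρ0, hρ1⟩ := hL' hρ; nlinarith [hr.1.le]
          exact Real.rpow_le_rpow_of_nonpos ha hac (by linarith)
        · rw [setLIntegral_const]
          exact ENNReal.mul_lt_top ENNReal.ofReal_lt_top hμL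
      rw [hψ]
      simp only []
      rw [heq1, ENNReal.ofReal_mul (Real.rpow_nonneg ha.le _),
        ENNReal.ofReal_toReal hfin'.ne]
      rw [mul_comm (ENNReal.ofReal ((1-r) ^ α)) _, mul_assoc,
        ← lintegral_mul_const' (ENNReal.ofReal ((1-r) ^ α) * ENNReal.ofReal ((1 - r)⁻¹)) _
          (ENNReal.mul_ne_top ENNReal.ofReal_ne_top ENNReal.ofReal_ne_top)]
      apply lintegral_congr_ae
      filter_upwards [ae_restrict_of_forall_mem hL (fun ρ hρ => hρ)] with ρ hρ
      rw [← ENNReal.ofReal_mul (Real.rpow_nonneg ha.le _),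
        ← ENNReal.ofReal_mul (Real.rpow_nonneg (hcpos r hr' ρ hρ).le _)]
      · congr 1
        have h2 : (1-r) ^ α * (1-r)⁻¹ = (1-r) ^ (α-1) := by
          rw [← Real.rpow_neg_one (1-r), ← Real.rpow_add ha]; ring_nf
        calc g r ρ * ((1-r) ^ α * (1-r)⁻¹) = ((1-r) ^ α * (1-r)⁻¹) * g r ρ := by ring
          _ = (1-r) ^ (α-1) * g r ρ := by rw [h2]
    have heq : (∫⁻ r in Ioo (0:ℝ) 1, ENNReal.ofReal (ψ r) * ENNReal.ofReal ((1 - r)⁻¹)) =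
        ∫⁻ r in Ioo (0:ℝ) 1, ∫⁻ ρ in L, ENNReal.ofReal ((1-r) ^ (α-1) * g r ρ) := by
      apply lintegral_congr_ae
      filter_upwards [ae_restrict_of_forall_mem measurableSet_Ioo (fun r hr => hr)] with r hr
      exact key r hr
    rw [heq]
    have hswap : (∫⁻ r in Ioo (0:ℝ) 1, ∫⁻ ρ in L, ENNReal.ofReal ((1-r) ^ (α-1) * g r ρ)) =
        ∫⁻ ρ in L, ∫⁻ r in Ioo (0:ℝ) 1, ENNReal.ofReal ((1-r) ^ (α-1) * g r ρ) := by
      apply lintegral_lintegral_swap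
      fun_prop
    rw [hswap]
    refine lt_of_le_of_lt (setLIntegral_mono (g := fun ρ =>
      ENNReal.ofReal ((2:ℝ) ^ (1+α) * α⁻¹) * ENNReal.ofReal ((1-ρ)⁻¹)) (by fun_prop) ?_) ?_
    · intro ρ hρ
      obtain ⟨hρ0, hρ1⟩ := hL' hρ
      exact aux_key_stmt12 α ρ hα hρ0 hρ1
    · rw [lintegral_const_mul' _ _ ENNReal.ofReal_ne_top]
      exact ENNReal.mul_lt_top ENNReal.ofReal_lt_top hfin
  refine ⟨part1, ⟨C, hψle⟩, ?_⟩
  -- Part 3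
  intro p hp
  have hbound : ∀ r ∈ Ioo (0:ℝ) 1,
      ENNReal.ofReal ((ψ r) ^ p) * ENNReal.ofReal ((1 - r)⁻¹) ≤
      ENNReal.ofReal (C ^ (p-1)) * (ENNReal.ofReal (ψ r) * ENNReal.ofReal ((1 - r)⁻¹)) := by
    intro r hr
    have hr' : r ∈ Ico (0:ℝ) 1 := ⟨hr.1.le, hr.2⟩
    have h1 : (ψ r) ^ p ≤ C ^ (p-1) * ψ r := by
      rcases eq_or_lt_of_le (hψ0 r hr') with h0 | h0
      · rw [← h0, Real.zero_rpow (by linarith)]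
        positivity
      · have : (ψ r) ^ p = (ψ r) ^ (p-1) * ψ r := by
          have hpe : p - 1 + 1 = p := by ring
          rw [← Real.rpow_add_one h0.ne' (p-1), hpe]
        rw [this]
        exact mul_le_mul_of_nonneg_right
          (Real.rpow_le_rpow (hψ0 r hr') (hψle r hr') (by linarith))
          (hψ0 r hr')
    calc ENNReal.ofReal ((ψ r) ^ p) * ENNReal.ofReal ((1 - r)⁻¹)
        ≤ ENNReal.ofReal (C ^ (p-1) * ψ r) * ENNReal.ofReal ((1 - r)⁻¹) :=
          mul_le_mul_left (ENNReal.ofReal_le_ofReal h1) _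
      _ = ENNReal.ofReal (C ^ (p-1)) * (ENNReal.ofReal (ψ r) * ENNReal.ofReal ((1 - r)⁻¹)) := by
          rw [ENNReal.ofReal_mul (Real.rpow_nonneg hC0 _)]; ring
  calc (∫⁻ r in Ioo (0:ℝ) 1, ENNReal.ofReal ((ψ r) ^ p) * ENNReal.ofReal ((1 - r)⁻¹))
      ≤ ∫⁻ r in Ioo (0:ℝ) 1, ENNReal.ofReal (C ^ (p-1)) *
          (ENNReal.ofReal (ψ r) * ENNReal.ofReal ((1 - r)⁻¹)) := by
        apply lintegral_mono_ae
        filter_upwards [ae_restrict_of_forall_mem measurableSet_Ioo (fun r hr => hr)] with r hr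
        exact hbound r hr
    _ = ENNReal.ofReal (C ^ (p-1)) *
          ∫⁻ r in Ioo (0:ℝ) 1, ENNReal.ofReal (ψ r) * ENNReal.ofReal ((1 - r)⁻¹) :=
        lintegral_const_mul' _ _ ENNReal.ofReal_ne_top
    _ < ⊤ := ENNReal.mul_lt_top ENNReal.ofReal_lt_top part1
end
end
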